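/- arXiv:0810.1342 — 8 statements merged into one kernel-verified Lean document; each statement's English description precedes it below -/
import Mathlib

section
/- Let m be a square-free positive integer with m ∉ {1,2,3,7,11}, and let 𝒪 be the ring of integers of ℚ(√-m). Then no element of 𝒪 has norm 2 and no element of 𝒪 has norm 3. -/
open Complex Matrix

/-- ω for ℚ(√-m): √-m if m ≡ 1,2 (mod 4), (1+√-m)/2 if m ≡ 3 (mod 4). -/
noncomputable def omg (m : ℕ) : ℂ :=
  if m % 4 = 3 then (1 + Real.sqrt m * Complex.I) / 2 else Real.sqrt m * Complex.I

/-- The ring of integers 𝒪 = ℤ[ω] of ℚ(√-m), as a subring of ℂ. -/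
noncomputable def ringO (m : ℕ) : Subalgebra ℤ ℂ := Algebra.adjoin ℤ {omg m}



lemma hs_sq (m : ℕ) : ((Real.sqrt m : ℝ) : ℂ) ^ 2 = (m : ℂ) := by
  rw [← Complex.ofReal_pow, Real.sq_sqrt (Nat.cast_nonneg m)]
  simp

lemma omg_sq (m : ℕ) : ∃ e k : ℤ, omg m ^ 2 = e * omg m - k := by
  have hs := hs_sq m
  by_cases h : m % 4 = 3
  · obtain ⟨j, hj⟩ : ∃ j : ℕ, m = 4 * j + 3 := ⟨m / 4, by omega⟩
    have hmc : (m : ℂ) = 4 * (j : ℂ) + 3 := by rw [hj]; push_cast; ring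
    refine ⟨1, (j : ℤ) + 1, ?_⟩
    simp only [omg, if_pos h]
    push_cast
    linear_combination (-1/4 : ℂ) * hs + (-1/4 : ℂ) * hmc +
      (((Real.sqrt m : ℝ) : ℂ) ^ 2 / 4) * Complex.I_sq
  · refine ⟨0, (m : ℤ), ?_⟩
    simp only [omg, if_neg h]
    push_cast
    linear_combination Complex.I ^ 2 * hs + (m : ℂ) * Complex.I_sq

lemma repr_mem (m : ℕ) (z : ℂ) (hz : z ∈ ringO m) : ∃ a b : ℤ, z = a + b * omg m := by
  obtain ⟨e, k, hek⟩ := omg_sq m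
  induction hz using Algebra.adjoin_induction with
  | mem x hx =>
      exact ⟨0, 1, by simp [Set.mem_singleton_iff.mp hx]⟩
  | algebraMap r => exact ⟨r, 0, by simp⟩
  | add x y _ _ hx hy =>
      obtain ⟨a, b, rfl⟩ := hx; obtain ⟨c, d, rfl⟩ := hy
      refine ⟨a + c, b + d, ?_⟩
      push_cast; ring
  | mul x y _ _ hx hy =>
      obtain ⟨a, b, rfl⟩ := hx; obtain ⟨c, d, rfl⟩ := hy
      refine ⟨a * c - b * d * k, a * d + b * c + b * d * e, ?_⟩
      push_cast
      linear_combination ((b : ℂ) * d) * hek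

lemma norm_eq3 (m : ℕ) (h : m % 4 = 3) (a b : ℤ) :
    (a + b * omg m) * (starRingEnd ℂ) (a + b * omg m) =
      (((2 * a + b) ^ 2 + m * b ^ 2 : ℤ) : ℂ) / 4 := by
  have hs := hs_sq m
  simp only [omg, if_pos h, map_add, _root_.map_mul, map_div₀, _root_.map_one, map_ofNat,
    map_intCast, Complex.conj_ofReal, Complex.conj_I]
  push_cast
  linear_combination ((b : ℂ) ^ 2 / 4) * hs +
    (-((b : ℂ) ^ 2 * ((Real.sqrt m : ℝ) : ℂ) ^ 2) / 4) * Complex.I_sq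

lemma norm_eqn3 (m : ℕ) (h : ¬ m % 4 = 3) (a b : ℤ) :
    (a + b * omg m) * (starRingEnd ℂ) (a + b * omg m) =
      ((a ^ 2 + m * b ^ 2 : ℤ) : ℂ) := by
  have hs := hs_sq m
  simp only [omg, if_neg h, map_add, _root_.map_mul, map_intCast,
    Complex.conj_ofReal, Complex.conj_I]
  push_cast
  linear_combination ((b : ℂ) ^ 2) * hs +
    (-((b : ℂ) ^ 2 * ((Real.sqrt m : ℝ) : ℂ) ^ 2)) * Complex.I_sq

lemma no_sq (x c : ℤ) (hc : c = 2 ∨ c = 3 ∨ c = 8 ∨ c = 12) : x ^ 2 ≠ c := by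
  intro h
  have h12 : x ^ 2 ≤ 12 := by rcases hc with rfl | rfl | rfl | rfl <;> linarith
  have h1 : x ≤ 3 := by nlinarith
  have h2 : -3 ≤ x := by nlinarith
  interval_cases x <;> rcases hc with rfl | rfl | rfl | rfl <;> norm_num at h

lemma no_rep (M a b c : ℤ) (hM : c < M) (hcpos : 0 < c)
    (hc : c = 2 ∨ c = 3 ∨ c = 8 ∨ c = 12) (h : a ^ 2 + M * b ^ 2 = c) : False := by
  rcases eq_or_ne b 0 with rfl | hb
  · exact no_sq a c hc (by linarith)
  · have hb2 : (1 : ℤ) ≤ b ^ 2 := by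
      rcases hb.lt_or_gt with h' | h' <;> nlinarith
    nlinarith [sq_nonneg a, mul_le_mul_of_nonneg_left hb2 (le_of_lt (lt_trans hcpos hM))]

theorem no_norm_two_or_three (m : ℕ) (hm : 0 < m) (hsf : Squarefree m)
    (hne : m ∉ ({1, 2, 3, 7, 11} : Set ℕ)) (z : ℂ) (hz : z ∈ ringO m) :
    z * (starRingEnd ℂ) z ≠ 2 ∧ z * (starRingEnd ℂ) z ≠ 3 := by
  simp only [Set.mem_insert_iff, Set.mem_singleton_iff, not_or] at hne
  obtain ⟨a, b, rfl⟩ := repr_mem m z hz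
  have h4 : ¬ (4 ∣ m) := by
    rintro ⟨t, ht⟩
    have := hsf 2 ⟨t, by omega⟩
    rw [Nat.isUnit_iff] at this
    omega
  have key : ∀ N : ℤ, N = 2 ∨ N = 3 →
      (a + b * omg m) * (starRingEnd ℂ) (a + b * omg m) ≠ (N : ℂ) := by
    intro N hN heq
    by_cases h : m % 4 = 3
    · have hm15 : 15 ≤ m := by omega
      rw [norm_eq3 m h a b] at heq
      have h4N : (((2 * a + b) ^ 2 + m * b ^ 2 : ℤ) : ℂ) = ((4 * N : ℤ) : ℂ) := by
        push_cast at heq ⊢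
        linear_combination 4 * heq
      have hint : (2 * a + b) ^ 2 + (m : ℤ) * b ^ 2 = 4 * N := by exact_mod_cast h4N
      have hmZ : (15 : ℤ) ≤ (m : ℤ) := by exact_mod_cast hm15
      exact no_rep (m : ℤ) (2 * a + b) b (4 * N) (by omega) (by omega) (by omega) hint
    · have hm5 : 5 ≤ m := by omega
      rw [norm_eqn3 m h a b] at heq
      have hint : a ^ 2 + (m : ℤ) * b ^ 2 = N := by exact_mod_cast heq
      have hmZ : (5 : ℤ) ≤ (m : ℤ) := by exact_mod_cast hm5
      exact no_rep (m : ℤ) a b N (by omega) (by omega) (by omega) hint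
  exact ⟨by simpa using key 2 (Or.inl rfl), by simpa using key 3 (Or.inr rfl)⟩
end

section
/- Over the Gaussian integers ℤ[i], there do not exist a, b, c, d ∈ ℤ[i] with aā + bb̄ = 2, cc̄ + dd̄ = 2, and ac̄ + bd̄ = 1. Equivalently, the binary Hermitian form with Gram matrix [[2,1],[1,2]] is not represented by the Hermitian form ⟨1,1⟩ over ℤ[i]. -/
open Complex Matrix

lemma omg_one : omg 1 = Complex.I := by
  simp [omg]

lemma ringO_one_repr {z : ℂ} (h : z ∈ ringO 1) : ∃ x y : ℤ, z = x + y * Complex.I := by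
  rw [ringO, omg_one] at h
  induction h using Algebra.adjoin_induction with
  | mem w hw =>
    rcases hw with rfl
    exact ⟨0, 1, by simp⟩
  | algebraMap r => exact ⟨r, 0, by simp⟩
  | add u v hu hv ihu ihv =>
    obtain ⟨x1, y1, rfl⟩ := ihu
    obtain ⟨x2, y2, rfl⟩ := ihv
    exact ⟨x1 + x2, y1 + y2, by push_cast; ring⟩
  | mul u v hu hv ihu ihv =>
    obtain ⟨x1, y1, rfl⟩ := ihu
    obtain ⟨x2, y2, rfl⟩ := ihv
    refine ⟨x1 * x2 - y1 * y2, x1 * y2 + y1 * x2, ?_⟩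
    push_cast
    linear_combination ((y1 : ℂ) * (y2 : ℂ)) * Complex.I_sq

lemma no_fst : ¬∃ a b c d : ℂ, a ∈ ringO 1 ∧ b ∈ ringO 1 ∧ c ∈ ringO 1 ∧ d ∈ ringO 1 ∧
      a * (starRingEnd ℂ) a + b * (starRingEnd ℂ) b = 2 ∧
      c * (starRingEnd ℂ) c + d * (starRingEnd ℂ) d = 2 ∧
      a * (starRingEnd ℂ) c + b * (starRingEnd ℂ) d = 1 := by
  rintro ⟨a, b, c, d, ha, hb, hc, hd, h1, h2, h3⟩
  have e3 : (starRingEnd ℂ) a * c + (starRingEnd ℂ) b * d = 1 := by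
    have := congrArg (starRingEnd ℂ) h3
    simpa [map_add, _root_.map_mul, Complex.conj_conj, mul_comm] using this
  have key : (a * d - b * c) * (starRingEnd ℂ) (a * d - b * c) = 3 := by
    simp only [map_sub, _root_.map_mul]
    linear_combination (c * (starRingEnd ℂ) c + d * (starRingEnd ℂ) d) * h1 + 2 * h2 -
      ((starRingEnd ℂ) a * c + (starRingEnd ℂ) b * d) * h3 - e3
  have hmem : a * d - b * c ∈ ringO 1 :=
    sub_mem (mul_mem ha hd) (mul_mem hb hc)
  obtain ⟨x, y, hxy⟩ := ringO_one_repr hmem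
  rw [hxy] at key
  simp only [map_add, _root_.map_mul, Complex.conj_I, map_intCast] at key
  have key2 : ((x ^ 2 + y ^ 2 : ℤ) : ℂ) = 3 := by
    push_cast
    linear_combination key + ((y : ℂ) ^ 2) * Complex.I_sq
  have key3 : (x ^ 2 + y ^ 2 : ℤ) = 3 := by exact_mod_cast key2
  have h4 : ∀ u v : ZMod 4, u ^ 2 + v ^ 2 ≠ 3 := by decide
  have := congrArg (Int.cast : ℤ → ZMod 4) key3
  push_cast at this
  exact h4 x y this

set_option maxRecDepth 4000 in
theorem gram_2112_not_represented_by_diag11 :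
    (¬∃ a b c d : ℂ, a ∈ ringO 1 ∧ b ∈ ringO 1 ∧ c ∈ ringO 1 ∧ d ∈ ringO 1 ∧
      a * (starRingEnd ℂ) a + b * (starRingEnd ℂ) b = 2 ∧
      c * (starRingEnd ℂ) c + d * (starRingEnd ℂ) d = 2 ∧
      a * (starRingEnd ℂ) c + b * (starRingEnd ℂ) d = 1) ∧
    (¬∃ X : Matrix (Fin 2) (Fin 2) ℂ, (∀ i j, X i j ∈ ringO 1) ∧
      !![(2 : ℂ), 1; 1, 2] = X * Xᴴ) := by
  refine ⟨no_fst, ?_⟩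
  rintro ⟨X, hmem, hX⟩
  apply no_fst
  refine ⟨X 0 0, X 0 1, X 1 0, X 1 1, hmem 0 0, hmem 0 1, hmem 1 0, hmem 1 1, ?_, ?_, ?_⟩
  · have h := congrFun (congrFun hX 0) 0
    rw [Matrix.mul_apply, Fin.sum_univ_two] at h
    simp only [Matrix.conjTranspose_apply, Matrix.cons_val', Matrix.cons_val_zero,
      Matrix.cons_val_one, Matrix.head_cons, Matrix.empty_val', Matrix.cons_val_fin_one,
      Matrix.head_fin_const, Matrix.of_apply] at h
    simp only [starRingEnd_apply]; exact h.symm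
  · have h := congrFun (congrFun hX 1) 1
    rw [Matrix.mul_apply, Fin.sum_univ_two] at h
    simp only [Matrix.conjTranspose_apply, Matrix.cons_val', Matrix.cons_val_zero,
      Matrix.cons_val_one, Matrix.head_cons, Matrix.empty_val', Matrix.cons_val_fin_one,
      Matrix.head_fin_const, Matrix.of_apply] at h
    simp only [starRingEnd_apply]; exact h.symm
  · have h := congrFun (congrFun hX 0) 1
    rw [Matrix.mul_apply, Fin.sum_univ_two] at h
    simp only [Matrix.conjTranspose_apply, Matrix.cons_val', Matrix.cons_val_zero,
      Matrix.cons_val_one, Matrix.head_cons, Matrix.empty_val', Matrix.cons_val_fin_one,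
      Matrix.head_fin_const, Matrix.of_apply] at h
    simp only [starRingEnd_apply]; exact h.symm
end

section
/- For any square-free positive integer m, the escalation of the binary Hermitian lattice ⟨1,1⟩ over the ring of integers 𝒪 of ℚ(√-m) has truant 2; that is, every binary Hermitian 𝒪-lattice ℓ with S(ℓ) = 1 is represented by ⟨1,1⟩, but there exists a binary Hermitian 𝒪-lattice ℓ with S(ℓ) = 2 not represented by ⟨1,1⟩. -/
open Complex Matrix
open scoped ComplexOrder

lemma omg_sq_s4 (m : ℕ) : (omg m) ^ 2 =
    (if m % 4 = 3 then ((-((m:ℤ)+1)/4 : ℤ) : ℂ) + omg m else ((-(m:ℤ) : ℤ) : ℂ)) := by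
  have hs : ((Real.sqrt m : ℝ):ℂ) ^ 2 = ((m:ℝ):ℂ) := by
    rw [← Complex.ofReal_pow, Real.sq_sqrt (by positivity)]
  push_cast at hs
  by_cases h : m % 4 = 3
  · simp only [omg, h, if_true]
    have h4 : ((-((m:ℤ)+1)/4 : ℤ) : ℂ) = -(((m:ℝ):ℂ)+1)/4 := by
      have hd : (4:ℤ) ∣ (-((m:ℤ)+1)) := by omega
      rw [Int.cast_div hd (by norm_num)]
      push_cast; ring
    rw [h4]
    push_cast
    linear_combination (((Real.sqrt m : ℝ):ℂ)^2/4) * Complex.I_sq - (1/4) * hs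
  · simp only [omg, h, if_false]
    push_cast
    linear_combination (((Real.sqrt m : ℝ):ℂ)^2) * Complex.I_sq - hs

lemma mem_ringO_iff (m : ℕ) {z : ℂ} :
    z ∈ ringO m ↔ ∃ a b : ℤ, z = (a : ℂ) + (b : ℂ) * omg m := by
  constructor
  · intro hz
    induction hz using Algebra.adjoin_induction with
    | mem x hx => exact ⟨0, 1, by simp [Set.mem_singleton_iff.mp hx]⟩
    | algebraMap r => exact ⟨r, 0, by simp [Algebra.algebraMap_eq_smul_one]⟩
    | add x y hx hy ihx ihy =>
        obtain ⟨a, b, rfl⟩ := ihx; obtain ⟨c, d, rfl⟩ := ihy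
        exact ⟨a + c, b + d, by push_cast; ring⟩
    | mul x y hx hy ihx ihy =>
        obtain ⟨a, b, rfl⟩ := ihx; obtain ⟨c, d, rfl⟩ := ihy
        have := omg_sq_s4 m
        by_cases h : m % 4 = 3
        · rw [h, if_pos rfl] at this
          refine ⟨a * c + b * d * (-((m:ℤ)+1)/4), a * d + b * c + b * d, ?_⟩
          push_cast
          linear_combination ((b:ℂ) * d) * this
        · rw [if_neg h] at this
          push_cast at this
          refine ⟨a * c + b * d * (-(m:ℤ)), a * d + b * c, ?_⟩
          push_cast
          linear_combination ((b:ℂ) * d) * this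
  · rintro ⟨a, b, rfl⟩
    have hω : omg m ∈ ringO m := Algebra.subset_adjoin rfl
    exact add_mem (by exact_mod_cast intCast_mem (ringO m) a)
      (mul_mem (by exact_mod_cast intCast_mem (ringO m) b) hω)

lemma cast_quarter (m : ℕ) (h : m % 4 = 3) :
    (((((m:ℤ))+1)/4 : ℤ) : ℝ) = ((m:ℝ)+1)/4 := by
  have hd : (4:ℤ) ∣ ((m:ℤ)+1) := by omega
  rw [Int.cast_div hd (by norm_num)]
  push_cast; ring

lemma normSq_coords3 (m : ℕ) (a b : ℤ) (h : m % 4 = 3) :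
    Complex.normSq ((a:ℂ) + (b:ℂ) * omg m)
      = ((a^2 + a*b + (((m:ℤ)+1)/4) * b^2 : ℤ) : ℝ) := by
  have hs : (Real.sqrt m) ^ 2 = (m:ℝ) := Real.sq_sqrt (by positivity)
  simp only [omg, h, if_true, Complex.normSq_apply, Complex.add_re, Complex.add_im,
    Complex.mul_re, Complex.mul_im, Complex.div_re, Complex.div_im, Complex.add_re,
    Complex.one_re, Complex.one_im, Complex.I_re, Complex.I_im, Complex.ofReal_re,
    Complex.ofReal_im, Complex.intCast_re, Complex.intCast_im, Complex.re_ofNat, Complex.im_ofNat]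
  push_cast [cast_quarter m h]
  nlinarith [hs]

lemma normSq_coords (m : ℕ) (a b : ℤ) (h : ¬ m % 4 = 3) :
    Complex.normSq ((a:ℂ) + (b:ℂ) * omg m) = ((a^2 + (m:ℤ) * b^2 : ℤ) : ℝ) := by
  have hs : (Real.sqrt m) ^ 2 = (m:ℝ) := Real.sq_sqrt (by positivity)
  simp only [omg, h, if_false, Complex.normSq_apply, Complex.add_re, Complex.add_im,
    Complex.mul_re, Complex.mul_im, Complex.I_re, Complex.I_im, Complex.ofReal_re,
    Complex.ofReal_im, Complex.intCast_re, Complex.intCast_im]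
  push_cast
  nlinarith [hs]
-- integer lemmas standalone
lemma int_one (m a b : ℤ) (hm : 1 ≤ m) (h : a^2 + m*b^2 = 1) :
    (b = 0 ∧ (a = 1 ∨ a = -1)) ∨ (m = 1 ∧ a = 0 ∧ (b = 1 ∨ b = -1)) := by
  rcases eq_or_ne b 0 with rfl | hb
  · left
    refine ⟨rfl, mul_self_eq_one_iff.mp ?_⟩
    nlinarith
  · have hb1 : 1 ≤ b^2 := by
      rcases lt_or_gt_of_ne hb with h' | h' <;> nlinarith
    have hm1 : m = 1 := by nlinarith [sq_nonneg a]
    subst hm1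
    have ha : a = 0 := by nlinarith [sq_nonneg a]
    subst ha
    refine Or.inr ⟨rfl, rfl, mul_self_eq_one_iff.mp ?_⟩
    nlinarith
lemma int_one3 (k a b : ℤ) (hk : 2 ≤ k) (h : a^2 + a*b + k*b^2 = 1) :
    b = 0 ∧ (a = 1 ∨ a = -1) := by
  rcases eq_or_ne b 0 with rfl | hb
  · refine ⟨rfl, mul_self_eq_one_iff.mp ?_⟩; nlinarith
  · exfalso
    have hb1 : 1 ≤ b^2 := by
      rcases lt_or_gt_of_ne hb with h' | h' <;> nlinarith
    nlinarith [sq_nonneg (2*a + b)]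
lemma int_two_eis (a b : ℤ) (h : a^2 + a*b + b^2 = 2) : False := by
  have hb2 : b^2 ≤ 2 := by nlinarith [sq_nonneg (2*a + b)]
  have hb : -1 ≤ b ∧ b ≤ 1 := by constructor <;> nlinarith
  have ha2 : a^2 ≤ 3 := by nlinarith [sq_nonneg (a + 2*b)]
  have ha : -1 ≤ a ∧ a ≤ 1 := by constructor <;> nlinarith
  obtain ⟨hb1, hb2'⟩ := hb
  obtain ⟨ha1, ha2'⟩ := ha
  interval_cases a <;> interval_cases b <;> omega

lemma omg_im_pos (m : ℕ) (hm : 0 < m) : 0 < (omg m).im := by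
  have hs : 0 < Real.sqrt m := Real.sqrt_pos.mpr (by positivity)
  by_cases h : m % 4 = 3 <;>
    simp [omg, h, Complex.div_im, Complex.add_im, Complex.mul_im] <;> positivity

lemma coords_im (m : ℕ) (a b : ℤ) : ((a:ℂ) + (b:ℂ) * omg m).im = b * (omg m).im := by
  simp

lemma star_omg (m : ℕ) : star (omg m) ∈ ringO m := by
  rw [mem_ringO_iff]
  by_cases h : m % 4 = 3
  · refine ⟨1, -1, ?_⟩
    simp only [omg, h, if_true, Complex.star_def, map_div₀, map_add, _root_.map_mul,
      _root_.map_one, Complex.conj_I, Complex.conj_ofReal, map_ofNat]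
    push_cast
    ring
  · exact ⟨0, -1, by simp only [omg, h, if_false, Complex.star_def, _root_.map_mul,
      Complex.conj_I, Complex.conj_ofReal]; push_cast; ring⟩

lemma star_mem_ringO (m : ℕ) {z : ℂ} (hz : z ∈ ringO m) : star z ∈ ringO m := by
  rw [mem_ringO_iff] at hz
  obtain ⟨a, b, rfl⟩ := hz
  have h1 : star ((a:ℂ) + (b:ℂ) * omg m) = (a:ℂ) + (b:ℂ) * star (omg m) := by
    simp [star_add, star_mul']
  rw [h1]
  have := star_omg m
  rw [mem_ringO_iff] at this ⊢
  obtain ⟨c, d, hcd⟩ := this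
  exact ⟨a + b*c, b*d, by rw [hcd]; push_cast; ring⟩

lemma normSq_int (m : ℕ) {z : ℂ} (hz : z ∈ ringO m) : ∃ t : ℤ, Complex.normSq z = (t:ℝ) := by
  rw [mem_ringO_iff] at hz
  obtain ⟨a, b, rfl⟩ := hz
  by_cases h : m % 4 = 3
  · exact ⟨_, normSq_coords3 m a b h⟩
  · exact ⟨_, normSq_coords m a b h⟩

lemma real_of_mem (m : ℕ) (hm : 0 < m) {z : ℂ} (hz : z ∈ ringO m) (him : z.im = 0) :
    ∃ a : ℤ, z = (a:ℂ) := by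
  rw [mem_ringO_iff] at hz
  obtain ⟨a, b, rfl⟩ := hz
  have := coords_im m a b
  rw [him] at this
  have hb : (b:ℝ) = 0 := by
    have := omg_im_pos m hm
    by_contra hb
    exact hb (by nlinarith [this])
  have hb0 : b = 0 := by exact_mod_cast hb
  exact ⟨a, by rw [hb0]; push_cast; ring⟩

lemma unit_char (m : ℕ) (hm : 0 < m) (hm3 : m ≠ 3) {z : ℂ} (hz : z ∈ ringO m)
    (h1 : Complex.normSq z = 1) :
    z = 1 ∨ z = -1 ∨ (m = 1 ∧ (z = Complex.I ∨ z = -Complex.I)) := by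
  rw [mem_ringO_iff] at hz
  obtain ⟨a, b, rfl⟩ := hz
  by_cases h : m % 4 = 3
  · rw [normSq_coords3 m a b h] at h1
    have h1' : a^2 + a*b + (((m:ℤ)+1)/4) * b^2 = 1 := by exact_mod_cast h1
    have hk : 2 ≤ ((m:ℤ)+1)/4 := by omega
    obtain ⟨rfl, h2⟩ := int_one3 _ a b hk h1'
    rcases h2 with rfl | rfl
    · left; norm_num
    · right; left; norm_num
  · rw [normSq_coords m a b h] at h1
    have h1' : a^2 + (m:ℤ)*b^2 = 1 := by exact_mod_cast h1
    rcases int_one (m:ℤ) a b (by exact_mod_cast hm) h1' with ⟨rfl, h2⟩ | ⟨hm1, rfl, h2⟩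
    · rcases h2 with rfl | rfl
      · left; norm_num
      · right; left; norm_num
    · have hm1' : m = 1 := by exact_mod_cast hm1
      subst hm1'
      have homg : omg 1 = Complex.I := by
        simp [omg, Real.sqrt_one]
      right; right
      refine ⟨rfl, ?_⟩
      rcases h2 with rfl | rfl
      · left; rw [homg]; push_cast; ring
      · right; rw [homg]; push_cast; ring

lemma unit_sum (m : ℕ) (hm : 0 < m) (hm3 : m ≠ 3) {u v : ℂ} (hu : u ∈ ringO m)
    (hv : v ∈ ringO m) (h1 : Complex.normSq u = 1) (h2 : Complex.normSq v = 1) :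
    u + v ≠ 1 := by
  have hu' : u = 1 ∨ u = -1 ∨ u = Complex.I ∨ u = -Complex.I := by
    rcases unit_char m hm hm3 hu h1 with H | H | ⟨_, H⟩ <;> tauto
  have hv' : v = 1 ∨ v = -1 ∨ v = Complex.I ∨ v = -Complex.I := by
    rcases unit_char m hm hm3 hv h2 with H | H | ⟨_, H⟩ <;> tauto
  rcases hu' with rfl | rfl | rfl | rfl <;> rcases hv' with rfl | rfl | rfl | rfl <;>
    intro hc <;> rw [Complex.ext_iff] at hc <;> norm_num at hc

lemma entry_XXH {n : ℕ} (X : Matrix (Fin n) (Fin 2) ℂ) (i j : Fin n) :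
    (X * Xᴴ) i j = X i 0 * (starRingEnd ℂ) (X j 0) + X i 1 * (starRingEnd ℂ) (X j 1) := by
  simp [Matrix.mul_apply, Matrix.conjTranspose_apply, Fin.sum_univ_two, Complex.star_def]

lemma no_norm2_eis {z : ℂ} (hz : z ∈ ringO 3) : Complex.normSq z ≠ 2 := by
  rw [mem_ringO_iff] at hz
  obtain ⟨a, b, rfl⟩ := hz
  rw [normSq_coords3 3 a b rfl]
  intro hc
  have : a^2 + a*b + (((3:ℤ)+1)/4) * b^2 = 2 := by exact_mod_cast hc
  norm_num at this
  exact int_two_eis a b (by linarith)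

lemma notrep_main (m : ℕ) (hm : 0 < m) (hm3 : m ≠ 3) :
    ¬∃ X : Matrix (Fin 2) (Fin 2) ℂ, (∀ i j, X i j ∈ ringO m) ∧
      (!![2,1;1,2] : Matrix (Fin 2) (Fin 2) ℂ) = X * Xᴴ := by
  rintro ⟨X, hX, hM⟩
  set α := X 0 0 with hα; set β := X 0 1 with hβ
  set γ := X 1 0 with hγ; set δ := X 1 1 with hδ
  have e00 : (2:ℂ) = α * (starRingEnd ℂ) α + β * (starRingEnd ℂ) β := by
    have := congrFun (congrFun hM 0) 0; rwa [entry_XXH] at this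
  have e11 : (2:ℂ) = γ * (starRingEnd ℂ) γ + δ * (starRingEnd ℂ) δ := by
    have := congrFun (congrFun hM 1) 1
    rwa [entry_XXH] at this
  have e01 : (1:ℂ) = α * (starRingEnd ℂ) γ + β * (starRingEnd ℂ) δ := by
    have := congrFun (congrFun hM 0) 1
    rwa [entry_XXH] at this
  rw [Complex.mul_conj, Complex.mul_conj] at e00 e11
  obtain ⟨ta, hta⟩ := normSq_int m (hX 0 0)
  obtain ⟨tb, htb⟩ := normSq_int m (hX 0 1)
  obtain ⟨tc, htc⟩ := normSq_int m (hX 1 0)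
  obtain ⟨td, htd⟩ := normSq_int m (hX 1 1)
  rw [← hα] at hta; rw [← hβ] at htb; rw [← hγ] at htc; rw [← hδ] at htd
  have h2x : ta + tb = 2 := by
    have : (2:ℝ) = Complex.normSq α + Complex.normSq β := by exact_mod_cast e00
    rw [hta, htb] at this; exact_mod_cast this.symm
  have h2y : tc + td = 2 := by
    have : (2:ℝ) = Complex.normSq γ + Complex.normSq δ := by exact_mod_cast e11
    rw [htc, htd] at this; exact_mod_cast this.symm
  have h0a : 0 ≤ ta := by have := Complex.normSq_nonneg α; rw [hta] at this; exact_mod_cast this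
  have h0b : 0 ≤ tb := by have := Complex.normSq_nonneg β; rw [htb] at this; exact_mod_cast this
  have h0c : 0 ≤ tc := by have := Complex.normSq_nonneg γ; rw [htc] at this; exact_mod_cast this
  have h0d : 0 ≤ td := by have := Complex.normSq_nonneg δ; rw [htd] at this; exact_mod_cast this
  -- helper: single-product case
  have prod_case : ∀ (u w : ℂ) (tu tw : ℤ), Complex.normSq u = tu → Complex.normSq w = tw →
      (1:ℂ) = u * (starRingEnd ℂ) w → (1:ℤ) = tu * tw := by
    intro u w tu tw hu hw h
    have := congrArg Complex.normSq h
    rw [Complex.normSq_mul, Complex.normSq_conj, hu, hw] at this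
    norm_num at this
    exact_mod_cast this
  rcases eq_or_ne tb 0 with hb0 | hb0
  · have : β = 0 := by
      rw [← Complex.normSq_eq_zero]; rw [htb, hb0]; norm_num
    rw [this] at e01; simp at e01
    have := prod_case α γ ta tc hta htc e01
    rw [show ta = 2 by omega] at this
    omega
  rcases eq_or_ne ta 0 with ha0 | ha0
  · have : α = 0 := by rw [← Complex.normSq_eq_zero]; rw [hta, ha0]; norm_num
    rw [this] at e01; simp at e01
    have := prod_case β δ tb td htb htd e01
    rw [show tb = 2 by omega] at this
    omega
  rcases eq_or_ne td 0 with hd0 | hd0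
  · have : δ = 0 := by rw [← Complex.normSq_eq_zero]; rw [htd, hd0]; norm_num
    rw [this] at e01; simp at e01
    have := prod_case α γ ta tc hta htc e01
    rw [show tc = 2 by omega] at this
    omega
  rcases eq_or_ne tc 0 with hc0 | hc0
  · have : γ = 0 := by rw [← Complex.normSq_eq_zero]; rw [htc, hc0]; norm_num
    rw [this] at e01; simp at e01
    have := prod_case β δ tb td htb htd e01
    rw [show td = 2 by omega] at this
    omega
  have ha1 : ta = 1 := by omega
  have hb1 : tb = 1 := by omega
  have hc1 : tc = 1 := by omega
  have hd1 : td = 1 := by omega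
  refine unit_sum m hm hm3 (u := α * (starRingEnd ℂ) γ) (v := β * (starRingEnd ℂ) δ)
    (mul_mem (hX 0 0) (star_mem_ringO m (hX 1 0)))
    (mul_mem (hX 0 1) (star_mem_ringO m (hX 1 1))) ?_ ?_ e01.symm
  · rw [Complex.normSq_mul, Complex.normSq_conj, hta, htc, ha1, hc1]; norm_num
  · rw [Complex.normSq_mul, Complex.normSq_conj, htb, htd, hb1, hd1]; norm_num

lemma notrep_eis :
    ¬∃ X : Matrix (Fin 2) (Fin 2) ℂ, (∀ i j, X i j ∈ ringO 3) ∧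
      (!![1,0;0,2] : Matrix (Fin 2) (Fin 2) ℂ) = X * Xᴴ := by
  rintro ⟨X, hX, hM⟩
  set α := X 0 0 with hα; set β := X 0 1 with hβ
  set γ := X 1 0 with hγ; set δ := X 1 1 with hδ
  have e00 : (1:ℂ) = α * (starRingEnd ℂ) α + β * (starRingEnd ℂ) β := by
    have := congrFun (congrFun hM 0) 0; rwa [entry_XXH] at this
  have e11 : (2:ℂ) = γ * (starRingEnd ℂ) γ + δ * (starRingEnd ℂ) δ := by
    have := congrFun (congrFun hM 1) 1; rwa [entry_XXH] at this
  have e01 : (0:ℂ) = α * (starRingEnd ℂ) γ + β * (starRingEnd ℂ) δ := by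
    have := congrFun (congrFun hM 0) 1; rwa [entry_XXH] at this
  rw [Complex.mul_conj, Complex.mul_conj] at e00 e11
  obtain ⟨ta, hta⟩ := normSq_int 3 (hX 0 0)
  obtain ⟨tb, htb⟩ := normSq_int 3 (hX 0 1)
  obtain ⟨tc, htc⟩ := normSq_int 3 (hX 1 0)
  obtain ⟨td, htd⟩ := normSq_int 3 (hX 1 1)
  rw [← hα] at hta; rw [← hβ] at htb; rw [← hγ] at htc; rw [← hδ] at htd
  have h1x : ta + tb = 1 := by
    have : (1:ℝ) = Complex.normSq α + Complex.normSq β := by exact_mod_cast e00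
    rw [hta, htb] at this; exact_mod_cast this.symm
  have h2y : tc + td = 2 := by
    have : (2:ℝ) = Complex.normSq γ + Complex.normSq δ := by exact_mod_cast e11
    rw [htc, htd] at this; exact_mod_cast this.symm
  have h0a : 0 ≤ ta := by have := Complex.normSq_nonneg α; rw [hta] at this; exact_mod_cast this
  have h0b : 0 ≤ tb := by have := Complex.normSq_nonneg β; rw [htb] at this; exact_mod_cast this
  have h0c : 0 ≤ tc := by have := Complex.normSq_nonneg γ; rw [htc] at this; exact_mod_cast this
  have h0d : 0 ≤ td := by have := Complex.normSq_nonneg δ; rw [htd] at this; exact_mod_cast this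
  have hcn2 : tc ≠ 2 := by
    intro hc; apply no_norm2_eis (hX 1 0); rw [← hγ, htc, hc]; norm_num
  have hdn2 : td ≠ 2 := by
    intro hc; apply no_norm2_eis (hX 1 1); rw [← hδ, htd, hc]; norm_num
  have hc1 : tc = 1 := by omega
  have hd1 : td = 1 := by omega
  rcases eq_or_ne tb 0 with hb0 | hb0
  · have hβ0 : β = 0 := by rw [← Complex.normSq_eq_zero]; rw [htb, hb0]; norm_num
    rw [hβ0] at e01; simp at e01
    rcases e01 with h | h
    · rw [h, Complex.normSq_zero] at hta
      have : ta = 0 := by exact_mod_cast hta.symm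
      omega
    · rw [h, Complex.normSq_zero] at htc
      have : tc = 0 := by exact_mod_cast htc.symm
      omega
  · have ha0 : ta = 0 := by omega
    have hα0 : α = 0 := by rw [← Complex.normSq_eq_zero]; rw [hta, ha0]; norm_num
    rw [hα0] at e01; simp at e01
    rcases e01 with h | h
    · rw [h, Complex.normSq_zero] at htb
      have : tb = 0 := by exact_mod_cast htb.symm
      omega
    · rw [h, Complex.normSq_zero] at htd
      have : td = 0 := by exact_mod_cast htd.symm
      omega

section gram
variable {k : ℕ}

lemma star_single (i : Fin k) (c : ℂ) :
    star (Pi.single i c : Fin k → ℂ) = Pi.single i (starRingEnd ℂ c) := by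
  funext l
  by_cases h : l = i <;> simp [Pi.single_apply, h, Complex.star_def]

lemma quad_eq {M B : Matrix (Fin k) (Fin k) ℂ} (hB : M = Bᴴ * B) (x : Fin k → ℂ) :
    star (B *ᵥ x) ⬝ᵥ (B *ᵥ x) = star x ⬝ᵥ (M *ᵥ x) := by
  simp only [hB, ← Matrix.mulVec_mulVec, Matrix.dotProduct_mulVec, Matrix.star_mulVec,
    Matrix.vecMul_vecMul]

lemma quad_two {M : Matrix (Fin k) (Fin k) ℂ} (i j : Fin k) (hij : i ≠ j) (c : ℂ) :
    star (Pi.single i c + Pi.single j 1) ⬝ᵥ (M *ᵥ (Pi.single i c + Pi.single j 1)) =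
      starRingEnd ℂ c * (M i i * c + M i j) + (M j i * c + M j j) := by
  rw [star_add, star_single, star_single, Matrix.mulVec_add, Matrix.mulVec_single,
    Matrix.mulVec_single, add_dotProduct, single_dotProduct,
    single_dotProduct]
  simp only [Pi.add_apply, _root_.map_one, Pi.smul_apply, op_smul_eq_mul, Matrix.col_apply]
  ring

lemma mulVec_two {B : Matrix (Fin k) (Fin k) ℂ} (i j : Fin k) (c : ℂ) (l : Fin k) :
    (B *ᵥ (Pi.single i c + Pi.single j 1)) l = B l i * c + B l j := by
  rw [Matrix.mulVec_add, Matrix.mulVec_single, Matrix.mulVec_single]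
  simp
  ring

lemma dot_self_nonneg_re (w : Fin k → ℂ) :
    star w ⬝ᵥ w = ((∑ l, Complex.normSq (w l) : ℝ) : ℂ) := by
  rw [dotProduct]
  push_cast
  congr 1
  funext l
  rw [Pi.star_apply, Complex.star_def, mul_comm, Complex.mul_conj]

lemma col_zero {M B : Matrix (Fin k) (Fin k) ℂ} (hB : M = Bᴴ * B) (i : Fin k)
    (h : M i i = 0) : ∀ l, B l i = 0 := by
  have h1 : star (fun l => B l i) ⬝ᵥ (fun l => B l i) = 0 := by
    rw [← h, hB]
    simp [Matrix.mul_apply, Matrix.conjTranspose_apply, dotProduct]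
  have := dotProduct_star_self_eq_zero.mp h1
  intro l
  exact congrFun this l

lemma row_zero {M B : Matrix (Fin k) (Fin k) ℂ} (hB : M = Bᴴ * B) (i : Fin k)
    (h : M i i = 0) : ∀ j, M i j = 0 := by
  intro j
  rw [hB]
  simp only [Matrix.mul_apply, Matrix.conjTranspose_apply]
  apply Finset.sum_eq_zero
  intro l _
  rw [col_zero hB i h l]
  simp

lemma bd {M B : Matrix (Fin k) (Fin k) ℂ} (hB : M = Bᴴ * B) (herm : M.IsHermitian)
    (i j : Fin k) (hii : M i i = 1) (hjj : M j j = 1) : Complex.normSq (M i j) ≤ 1 := by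
  rcases eq_or_ne i j with rfl | hij
  · rw [hii]; norm_num
  · set x : Fin k → ℂ := Pi.single i (-(M i j)) + Pi.single j 1 with hx
    have h1 := quad_eq hB x
    rw [quad_two i j hij] at h1
    rw [dot_self_nonneg_re] at h1
    have hji : M j i = starRingEnd ℂ (M i j) := by
      rw [← herm.apply i j, Complex.star_def, Complex.conj_conj]
    rw [hii, hjj, hji] at h1
    have h2 : ((∑ l, Complex.normSq ((B *ᵥ x) l) : ℝ) : ℂ)
        = ((1 - Complex.normSq (M i j) : ℝ) : ℂ) := by
      rw [h1]
      push_cast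
      rw [← Complex.mul_conj (M i j)]
      ring
    have h3 := Complex.ofReal_injective h2
    have h4 : 0 ≤ ∑ l, Complex.normSq ((B *ᵥ x) l) :=
      Finset.sum_nonneg fun l _ => Complex.normSq_nonneg _
    linarith [h3 ▸ h4]

lemma par {M B : Matrix (Fin k) (Fin k) ℂ} (hB : M = Bᴴ * B) (herm : M.IsHermitian)
    (i j : Fin k) (hii : M i i = 1) (hjj : M j j = 1)
    (hij1 : Complex.normSq (M i j) = 1) :
    ∀ t, M j t = starRingEnd ℂ (M i j) * M i t := by
  rcases eq_or_ne i j with rfl | hij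
  · rw [hii]; intro t; simp
  · set x : Fin k → ℂ := Pi.single i (-(M i j)) + Pi.single j 1 with hx
    have h1 := quad_eq hB x
    rw [quad_two i j hij] at h1
    have hji : M j i = starRingEnd ℂ (M i j) := by
      rw [← herm.apply i j, Complex.star_def, Complex.conj_conj]
    rw [hii, hjj, hji] at h1
    have hval : starRingEnd ℂ (-(M i j)) * ((1:ℂ) * (-(M i j)) + M i j)
        + (starRingEnd ℂ (M i j) * (-(M i j)) + 1) = 0 := by
      have hc : starRingEnd ℂ (M i j) * M i j = 1 := by
        rw [mul_comm, Complex.mul_conj, hij1]; norm_num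
      simp only [map_neg]
      linear_combination -hc
    have h2 : star (B *ᵥ x) ⬝ᵥ (B *ᵥ x) = 0 := h1.trans hval
    have h3 := dotProduct_star_self_eq_zero.mp h2
    have hcol : ∀ l, B l j = M i j * B l i := by
      intro l
      have := congrFun h3 l
      rw [mulVec_two] at this
      have : B l i * (-(M i j)) + B l j = 0 := this
      linear_combination this
    intro t
    have hMjt : M j t = ∑ l, starRingEnd ℂ (B l j) * B l t := by
      rw [hB]
      simp [Matrix.mul_apply, Matrix.conjTranspose_apply, Complex.star_def]
    have hMit : M i t = ∑ l, starRingEnd ℂ (B l i) * B l t := by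
      rw [hB]
      simp [Matrix.mul_apply, Matrix.conjTranspose_apply, Complex.star_def]
    rw [hMjt, hMit, Finset.mul_sum]
    apply Finset.sum_congr rfl
    intro l _
    rw [hcol l, _root_.map_mul]
    ring
end gram

lemma rank_ge_three {k : ℕ} (M : Matrix (Fin k) (Fin k) ℂ) (f : Fin 3 → Fin k)
    (hsub : M.submatrix f f = 1) : 3 ≤ M.rank := by
  have e : M.submatrix f f
      = (1 : Matrix (Fin k) (Fin k) ℂ).submatrix f id * M
        * (1 : Matrix (Fin k) (Fin k) ℂ).submatrix id f := by
    conv_lhs => rw [(by simp : M = 1 * M * 1)]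
    rw [Matrix.submatrix_mul _ _ _ id _ Function.bijective_id,
      Matrix.submatrix_mul _ _ _ id _ Function.bijective_id, Matrix.submatrix_id_id]
  have h3 : (M.submatrix f f).rank = 3 := by
    rw [hsub, Matrix.rank_one]
    simp
  have hle : (M.submatrix f f).rank ≤ M.rank := by
    rw [e]
    exact le_trans (Matrix.rank_mul_le_left _ _)
      (Matrix.rank_mul_le_right _ _)
  omega

lemma gram (m : ℕ) {k : ℕ} (M : Matrix (Fin k) (Fin k) ℂ)
    (hmem : ∀ i j, M i j ∈ ringO m) (hpsd : M.PosSemidef) (hrk : M.rank ≤ 2)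
    (hdiag : ∀ i, M i i = 0 ∨ M i i = 1) :
    ∃ X : Matrix (Fin k) (Fin 2) ℂ, (∀ i j, X i j ∈ ringO m) ∧ M = X * Xᴴ := by
  open scoped MatrixOrder in
  obtain ⟨B, hB⟩ := CStarAlgebra.nonneg_iff_eq_star_mul_self.mp hpsd.nonneg
  rw [Matrix.star_eq_conjTranspose] at hB
  have herm := hpsd.isHermitian
  have hconj : ∀ i j, M j i = starRingEnd ℂ (M i j) := fun i j => by
    rw [← herm.apply i j, Complex.star_def, Complex.conj_conj]
  have hval : ∀ i j, M i i = 1 → M j j = 1 → (M i j = 0 ∨ Complex.normSq (M i j) = 1) := by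
    intro i j h1 h1'
    obtain ⟨t, ht⟩ := normSq_int m (hmem i j)
    have h2 := bd hB herm i j h1 h1'
    have h0 := Complex.normSq_nonneg (M i j)
    rw [ht] at h2 h0
    have ht0 : (0:ℤ) ≤ t := by exact_mod_cast h0
    have ht1 : t ≤ 1 := by exact_mod_cast h2
    rcases (by omega : t = 0 ∨ t = 1) with rfl | rfl
    · left
      rw [← Complex.normSq_eq_zero, ht]
      norm_num
    · right
      rw [ht]
      norm_num
  by_cases hex : ∃ i0, M i0 i0 = 1
  · obtain ⟨i0, hi0⟩ := hex
    by_cases hex1 : ∃ i1, M i1 i1 = 1 ∧ M i0 i1 = 0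
    · obtain ⟨i1, hi1, hperp⟩ := hex1
      have hcov : ∀ i, M i i = 1 → M i0 i ≠ 0 ∨ M i1 i ≠ 0 := by
        intro i hi
        by_contra hc
        push_neg at hc
        obtain ⟨h1, h2⟩ := hc
        have hsub : M.submatrix ![i0, i1, i] ![i0, i1, i] = 1 := by
          ext a b
          fin_cases a <;> fin_cases b <;>
            simp [Matrix.submatrix_apply, Matrix.one_apply, hi0, hi1, hi, hperp, h1, h2] <;>
            first
              | (rw [hconj i0 i1, hperp]; simp)
              | (rw [hconj i0 i, h1]; simp)
              | (rw [hconj i1 i, h2]; simp)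
        have := rank_ge_three M ![i0, i1, i] hsub
        omega
      have hkey : ∀ i j, M i j = M i i0 * M i0 j + M i i1 * M i1 j := by
        intro i j
        rcases hdiag i with h0 | h1
        · rw [row_zero hB i h0 j, row_zero hB i h0 i0, row_zero hB i h0 i1]
          ring
        · rcases hcov i h1 with hne | hne
          · have hns : Complex.normSq (M i0 i) = 1 := by
              rcases hval i0 i hi0 h1 with h | h
              · exact absurd h hne
              · exact h
            have hpar := par hB herm i0 i hi0 h1 hns
            have hii0 : starRingEnd ℂ (M i0 i) = M i i0 := (hconj i0 i).symm
            have h2 : M i i1 = 0 := by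
              rw [hpar i1, hii0, hperp]
              ring
            rw [hpar j, hii0, h2]
            ring
          · have hns : Complex.normSq (M i1 i) = 1 := by
              rcases hval i1 i hi1 h1 with h | h
              · exact absurd h hne
              · exact h
            have hpar := par hB herm i1 i hi1 h1 hns
            have hii1 : starRingEnd ℂ (M i1 i) = M i i1 := (hconj i1 i).symm
            have h2 : M i i0 = 0 := by
              rw [hpar i0, hii1, hconj i0 i1, hperp]
              simp
            rw [hpar j, hii1, h2]
            ring
      refine ⟨Matrix.of (fun i c => if c = 0 then M i i0 else M i i1), ?_, ?_⟩
      · intro i c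
        dsimp only [Matrix.of_apply]
        split_ifs <;> exact hmem _ _
      · ext i j
        rw [Matrix.mul_apply, Fin.sum_univ_two]
        simp only [Matrix.conjTranspose_apply, Matrix.of_apply]
        norm_num
        rw [← hconj j i0, ← hconj j i1]
        exact hkey i j
    · push_neg at hex1
      have hkey : ∀ i j, M i j = M i i0 * M i0 j := by
        intro i j
        rcases hdiag i with h0 | h1
        · rw [row_zero hB i h0 j, row_zero hB i h0 i0]
          ring
        · have hne := hex1 i h1
          have hns : Complex.normSq (M i0 i) = 1 := by
            rcases hval i0 i hi0 h1 with h | h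
            · exact absurd h hne
            · exact h
          have hpar := par hB herm i0 i hi0 h1 hns
          rw [hpar j, (hconj i0 i).symm]
      refine ⟨Matrix.of (fun i c => if c = 0 then M i i0 else 0), ?_, ?_⟩
      · intro i c
        dsimp only [Matrix.of_apply]
        split_ifs
        · exact hmem _ _
        · exact zero_mem _
      · ext i j
        rw [Matrix.mul_apply, Fin.sum_univ_two]
        simp only [Matrix.conjTranspose_apply, Matrix.of_apply]
        norm_num
        rw [hkey i j, ← hconj j i0]
  · push_neg at hex
    refine ⟨0, fun i j => zero_mem _, ?_⟩
    ext i j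
    have h0 : M i i = 0 := by
      rcases hdiag i with h | h
      · exact h
      · exact absurd h (hex i)
    rw [row_zero hB i h0 j]
    simp

lemma diag_entry_quad {k : ℕ} (M : Matrix (Fin k) (Fin k) ℂ) (i : Fin k) :
    star (Pi.single i 1 : Fin k → ℂ) ⬝ᵥ (M *ᵥ (Pi.single i 1 : Fin k → ℂ)) = M i i := by
  rw [star_single, Matrix.mulVec_single, single_dotProduct]
  simp

lemma truant_half (m : ℕ) (hm : 0 < m) {M : Matrix (Fin 2) (Fin 2) ℂ}
    (hpsd : M.PosSemidef) (hrk : M.rank ≤ 2)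
    (hnot : ¬∃ X : Matrix (Fin 2) (Fin 2) ℂ, (∀ i j, X i j ∈ ringO m) ∧ M = X * Xᴴ) :
    ∀ (k : ℕ) (M' : Matrix (Fin k) (Fin k) ℂ),
      (∀ i j, M' i j ∈ ringO m) →
      (∃ (Y : Matrix (Fin k) (Fin 2) ℂ) (Z : Matrix (Fin 2) (Fin k) ℂ),
        (∀ i j, Y i j ∈ ringO m) ∧ (∀ i j, Z i j ∈ ringO m) ∧
        M' = Y * M * Yᴴ ∧ M = Z * M' * Zᴴ) →
      ∃ i, 2 ≤ (M' i i).re := by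
  rintro k M' hmem ⟨Y, Z, hY, hZ, hM', hM⟩
  by_contra hc
  push_neg at hc
  have hpsd' : M'.PosSemidef := hM' ▸ hpsd.mul_mul_conjTranspose_same Y
  have hrk' : M'.rank ≤ 2 := by
    rw [hM']
    exact le_trans (le_trans (Matrix.rank_mul_le_left _ _) (Matrix.rank_mul_le_right _ _)) hrk
  have hdiag : ∀ i, M' i i = 0 ∨ M' i i = 1 := by
    intro i
    have hher := hpsd'.isHermitian.apply i i
    have him : (M' i i).im = 0 := by
      have := congrArg Complex.im hher
      simp only [Complex.star_def, Complex.conj_im] at this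
      linarith
    obtain ⟨a, ha⟩ := real_of_mem m hm (hmem i i) him
    have h0 : 0 ≤ (M' i i).re := by
      have h1 := hpsd'.dotProduct_mulVec_nonneg (Pi.single i 1)
      rw [diag_entry_quad] at h1
      exact (Complex.le_def.mp h1).1
    have h2 := hc i
    rw [ha] at h0 h2 ⊢
    simp only [Complex.intCast_re] at h0 h2
    have ha0 : (0:ℤ) ≤ a := by exact_mod_cast h0
    have ha2 : a < 2 := by exact_mod_cast h2
    rcases (by omega : a = 0 ∨ a = 1) with rfl | rfl
    · left; norm_num
    · right; norm_num
  obtain ⟨X', hX', hXX⟩ := gram m M' hmem hpsd' hrk' hdiag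
  apply hnot
  refine ⟨Z * X', ?_, ?_⟩
  · intro i j
    rw [Matrix.mul_apply]
    exact sum_mem fun l _ => mul_mem (hZ i l) (hX' l j)
  · rw [hM, hXX, Matrix.conjTranspose_mul]
    simp only [Matrix.mul_assoc]



/-- The truant of ⟨1,1⟩ is 2:  every binary Hermitian 𝒪-lattice (given by the formal
Gram matrix of a generating set) with S(ℓ) = 1 is represented by ⟨1,1⟩, while some
binary Hermitian 𝒪-lattice with S(ℓ) = 2 is not represented by ⟨1,1⟩. -/
theorem truant_of_diag11_is_two (m : ℕ) (hm : 0 < m) (hsf : Squarefree m) :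
    -- every binary lattice admitting a generating set of vectors of norm 1 (S(ℓ) = 1)
    -- is represented by ⟨1,1⟩
    (∀ (n : ℕ) (M : Matrix (Fin n) (Fin n) ℂ),
      (∀ i j, M i j ∈ ringO m) → M.PosSemidef → M.rank = 2 →
      (∀ i, M i i = 1) →
      ∃ X : Matrix (Fin n) (Fin 2) ℂ, (∀ i j, X i j ∈ ringO m) ∧ M = X * Xᴴ) ∧
    -- and there is a binary lattice with S(ℓ) = 2 not represented by ⟨1,1⟩
    (∃ (n : ℕ) (M : Matrix (Fin n) (Fin n) ℂ),
      (∀ i j, M i j ∈ ringO m) ∧ M.PosSemidef ∧ M.rank = 2 ∧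
      -- this generating set has all norms at most 2, so S(ℓ) ≤ 2
      (∀ i, (M i i).re ≤ 2) ∧
      -- every generating set of an isometric copy contains a vector of norm at least 2,
      -- so S(ℓ) ≥ 2
      (∀ (k : ℕ) (M' : Matrix (Fin k) (Fin k) ℂ),
        (∀ i j, M' i j ∈ ringO m) →
        (∃ (Y : Matrix (Fin k) (Fin n) ℂ) (Z : Matrix (Fin n) (Fin k) ℂ),
          (∀ i j, Y i j ∈ ringO m) ∧ (∀ i j, Z i j ∈ ringO m) ∧
          M' = Y * M * Yᴴ ∧ M = Z * M' * Zᴴ) →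
        ∃ i, 2 ≤ (M' i i).re) ∧
      ¬∃ X : Matrix (Fin n) (Fin 2) ℂ, (∀ i j, X i j ∈ ringO m) ∧ M = X * Xᴴ) := by
  constructor
  · intro n M hmem hpsd hrk hdiag
    exact gram m M hmem hpsd (le_of_eq hrk) (fun i => Or.inr (hdiag i))
  · have h2mem : (2:ℂ) ∈ ringO m := by
      have : ((2:ℤ):ℂ) ∈ ringO m := intCast_mem _ _
      simpa using this
    by_cases hm3 : m = 3
    · subst hm3
      refine ⟨2, !![1,0;0,2], ?_, ?_, ?_, ?_, ?_, notrep_eis⟩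
      · intro i j
        fin_cases i <;> fin_cases j <;> simp <;>
          first | exact one_mem _ | exact zero_mem _ | exact h2mem
      · have hA : (!![1,0;0,2] : Matrix (Fin 2) (Fin 2) ℂ)
            = (!![1,0;0,1;0,1] : Matrix (Fin 3) (Fin 2) ℂ)ᴴ * (!![1,0;0,1;0,1] : Matrix (Fin 3) (Fin 2) ℂ) := by
          ext i j
          fin_cases i <;> fin_cases j <;>
            simp [Matrix.mul_apply, Fin.sum_univ_three, Matrix.conjTranspose_apply,
                Matrix.vecHead, Matrix.vecTail] <;> norm_num
        rw [hA]
        exact Matrix.posSemidef_conjTranspose_mul_self _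
      · rw [Matrix.rank_of_isUnit]
        · simp
        · rw [Matrix.isUnit_iff_isUnit_det, Matrix.det_fin_two_of]
          norm_num
      · intro i
        fin_cases i <;> norm_num
      · apply truant_half 3 (by norm_num)
        · have hA : (!![1,0;0,2] : Matrix (Fin 2) (Fin 2) ℂ)
              = (!![1,0;0,1;0,1] : Matrix (Fin 3) (Fin 2) ℂ)ᴴ * (!![1,0;0,1;0,1] : Matrix (Fin 3) (Fin 2) ℂ) := by
            ext i j
            fin_cases i <;> fin_cases j <;>
              simp [Matrix.mul_apply, Fin.sum_univ_three, Matrix.conjTranspose_apply,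
                Matrix.vecHead, Matrix.vecTail] <;> norm_num
          rw [hA]
          exact Matrix.posSemidef_conjTranspose_mul_self _
        · rw [Matrix.rank_of_isUnit]
          · simp
          · rw [Matrix.isUnit_iff_isUnit_det, Matrix.det_fin_two_of]
            norm_num
        · exact notrep_eis
    · refine ⟨2, !![2,1;1,2], ?_, ?_, ?_, ?_, ?_, notrep_main m hm hm3⟩
      · intro i j
        fin_cases i <;> fin_cases j <;> simp <;>
          first | exact one_mem _ | exact zero_mem _ | exact h2mem
      · have hA : (!![2,1;1,2] : Matrix (Fin 2) (Fin 2) ℂ)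
            = (!![1,1;1,0;0,1] : Matrix (Fin 3) (Fin 2) ℂ)ᴴ * (!![1,1;1,0;0,1] : Matrix (Fin 3) (Fin 2) ℂ) := by
          ext i j
          fin_cases i <;> fin_cases j <;>
            simp [Matrix.mul_apply, Fin.sum_univ_three, Matrix.conjTranspose_apply,
                Matrix.vecHead, Matrix.vecTail] <;> norm_num
        rw [hA]
        exact Matrix.posSemidef_conjTranspose_mul_self _
      · rw [Matrix.rank_of_isUnit]
        · simp
        · rw [Matrix.isUnit_iff_isUnit_det, Matrix.det_fin_two_of]
          norm_num
      · intro i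
        fin_cases i <;> norm_num
      · apply truant_half m hm
        · have hA : (!![2,1;1,2] : Matrix (Fin 2) (Fin 2) ℂ)
              = (!![1,1;1,0;0,1] : Matrix (Fin 3) (Fin 2) ℂ)ᴴ * (!![1,1;1,0;0,1] : Matrix (Fin 3) (Fin 2) ℂ) := by
            ext i j
            fin_cases i <;> fin_cases j <;>
              simp [Matrix.mul_apply, Fin.sum_univ_three, Matrix.conjTranspose_apply,
                Matrix.vecHead, Matrix.vecTail] <;> norm_num
          rw [hA]
          exact Matrix.posSemidef_conjTranspose_mul_self _
        · rw [Matrix.rank_of_isUnit]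
          · simp
          · rw [Matrix.isUnit_iff_isUnit_det, Matrix.det_fin_two_of]
            norm_num
        · exact notrep_main m hm hm3
end

section
/- Over the ring of integers 𝒪 = ℤ[√-2] of ℚ(√-2), the binary Hermitian lattice with Gram matrix [[2, -1+√-2],[-1-√-2, 2]] is represented by neither ⟨1,1,1⟩ nor ⟨1,1,2⟩. -/
open Complex Matrix

lemma homg : omg 2 = Real.sqrt 2 * I := by norm_num [omg]

lemma hw2 : (omg 2)^2 = -2 := by
  rw [homg, mul_pow, I_sq]
  rw [show ((Real.sqrt 2:ℝ):ℂ)^2 = ((Real.sqrt 2^2 : ℝ):ℂ) by push_cast; ring]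
  rw [Real.sq_sqrt (by norm_num : (0:ℝ) ≤ 2)]
  norm_num

lemma hstar : star (omg 2) = -omg 2 := by rw [homg]; simp

lemma starform (a b : ℤ) :
    (starRingEnd ℂ) ((a:ℂ) + (b:ℂ) * omg 2) = (a:ℂ) - (b:ℂ) * omg 2 := by
  have : (starRingEnd ℂ) ((a:ℂ) + (b:ℂ) * omg 2) = star ((a:ℂ) + (b:ℂ) * omg 2) := rfl
  rw [this]
  simp [hstar]
  ring

lemma starform' (a b : ℤ) :
    star ((a:ℂ) + (b:ℂ) * omg 2) = (a:ℂ) - (b:ℂ) * omg 2 := starform a b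

lemma injO {a b c d : ℤ} (h : (a:ℂ) + b * omg 2 = c + d * omg 2) : a = c ∧ b = d := by
  rw [homg, Complex.ext_iff] at h
  simp at h
  obtain ⟨h1, h2⟩ := h
  exact ⟨by exact_mod_cast h1, by exact_mod_cast h2⟩

lemma memO {x : ℂ} (hx : x ∈ ringO 2) : ∃ a b : ℤ, x = a + b * omg 2 := by
  induction hx using Algebra.adjoin_induction with
  | mem y hy => exact ⟨0, 1, by simp [Set.mem_singleton_iff.mp hy]⟩
  | algebraMap n => exact ⟨n, 0, by simp⟩
  | add y z _ _ hy hz =>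
      obtain ⟨a, b, rfl⟩ := hy; obtain ⟨c, d, rfl⟩ := hz
      exact ⟨a + c, b + d, by push_cast; ring⟩
  | mul y z _ _ hy hz =>
      obtain ⟨a, b, rfl⟩ := hy; obtain ⟨c, d, rfl⟩ := hz
      exact ⟨a * c - 2 * b * d, a * d + b * c, by push_cast; linear_combination (b*d : ℂ) * hw2⟩

lemma zero3 {x y z : ℤ} (h : x^2+y^2+z^2 = 0) : x = 0 ∧ y = 0 ∧ z = 0 := by
  have hx : x ^ 2 = 0 := by nlinarith [sq_nonneg x, sq_nonneg y, sq_nonneg z]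
  have hy : y ^ 2 = 0 := by nlinarith [sq_nonneg x, sq_nonneg y, sq_nonneg z]
  have hz : z ^ 2 = 0 := by nlinarith [sq_nonneg x, sq_nonneg y, sq_nonneg z]
  exact ⟨pow_eq_zero_iff two_ne_zero |>.mp hx, pow_eq_zero_iff two_ne_zero |>.mp hy,
    pow_eq_zero_iff two_ne_zero |>.mp hz⟩

lemma zero2 {x y : ℤ} (h : x^2+y^2 = 0) : x = 0 ∧ y = 0 := by
  have := zero3 (x := x) (y := y) (z := 0) (by linarith)
  exact ⟨this.1, this.2.1⟩

lemma rowcase {a b c d e f : ℤ} (h : a^2+b^2+c^2+2*(d^2+e^2+f^2) = 2) :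
    (a = 0 ∧ b = 0 ∧ c = 0) ∨ (d = 0 ∧ e = 0 ∧ f = 0) := by
  have h1 : a^2+b^2+c^2 = 0 ∨ d^2+e^2+f^2 = 0 := by
    have p1 : 0 ≤ a^2+b^2+c^2 := by positivity
    have p2 : 0 ≤ d^2+e^2+f^2 := by positivity
    rcases (by omega : d^2+e^2+f^2 = 0 ∨ d^2+e^2+f^2 = 1) with h3 | h3
    · right; exact h3
    · left; omega
  rcases h1 with h1 | h1
  · exact Or.inl (zero3 h1)
  · exact Or.inr (zero3 h1)

lemma int1 {a0 b0 c0 d0 e0 f0 a1 b1 c1 d1 e1 f1 : ℤ}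
    (h1 : a0^2+b0^2+c0^2+2*(d0^2+e0^2+f0^2) = 2)
    (h2 : a1^2+b1^2+c1^2+2*(d1^2+e1^2+f1^2) = 2)
    (h3 : a0*a1+b0*b1+c0*c1+2*(d0*d1+e0*e1+f0*f1) = -1)
    (h4 : d0*a1+e0*b1+f0*c1-(a0*d1+b0*e1+c0*f1) = 1) : False := by
  rcases rowcase h1 with ⟨rfl, rfl, rfl⟩ | ⟨rfl, rfl, rfl⟩ <;>
    rcases rowcase h2 with ⟨rfl, rfl, rfl⟩ | ⟨rfl, rfl, rfl⟩
  · obtain ⟨k, hk⟩ : ∃ k, d0*d1+e0*e1+f0*f1 = k := ⟨_, rfl⟩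
    rw [hk] at h3; omega
  all_goals omega

lemma rowcase2 {a0 a1 a2 b0 b1 b2 : ℤ}
    (h : a0^2+a1^2+2*a2^2+2*(b0^2+b1^2)+4*b2^2 = 2) :
    (a0 = 0 ∧ a1 = 0 ∧ b2 = 0) ∨ (b0 = 0 ∧ b1 = 0 ∧ a2 = 0 ∧ b2 = 0) := by
  have hb2 : b2 = 0 := by
    have : b2^2 = 0 := by
      nlinarith [sq_nonneg a0, sq_nonneg a1, sq_nonneg a2, sq_nonneg b0, sq_nonneg b1, sq_nonneg b2]
    exact pow_eq_zero_iff two_ne_zero |>.mp this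
  subst hb2
  have h1 : a0^2+a1^2 = 0 ∨ b0^2+b1^2+a2^2 = 0 := by
    have p1 : 0 ≤ a0^2+a1^2 := by positivity
    have p2 : 0 ≤ b0^2+b1^2+a2^2 := by positivity
    have key : a0^2+a1^2 + 2*(b0^2+b1^2+a2^2) = 2 := by linarith
    rcases (by omega : b0^2+b1^2+a2^2 = 0 ∨ b0^2+b1^2+a2^2 = 1) with h3 | h3
    · right; exact h3
    · left; omega
  rcases h1 with h1 | h1
  · obtain ⟨r1, r2⟩ := zero2 h1; exact Or.inl ⟨r1, r2, rfl⟩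
  · obtain ⟨r1, r2, r3⟩ := zero3 h1; exact Or.inr ⟨r1, r2, r3, rfl⟩

lemma int2 {a0 a1 a2 b0 b1 b2 c0 c1 c2 d0 d1 d2 : ℤ}
    (h1 : a0^2+a1^2+2*a2^2+2*(b0^2+b1^2)+4*b2^2 = 2)
    (h2 : c0^2+c1^2+2*c2^2+2*(d0^2+d1^2)+4*d2^2 = 2)
    (h3 : a0*c0+a1*c1+2*(a2*c2)+2*(b0*d0+b1*d1)+4*(b2*d2) = -1)
    (h4 : b0*c0+b1*c1+2*(b2*c2)-(a0*d0+a1*d1+2*(a2*d2)) = 1) : False := by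
  rcases rowcase2 h1 with ⟨rfl, rfl, rfl⟩ | ⟨rfl, rfl, rfl, rfl⟩ <;>
    rcases rowcase2 h2 with ⟨rfl, rfl, rfl⟩ | ⟨rfl, rfl, rfl, rfl⟩
  · obtain ⟨k, hk⟩ : ∃ k, a2*c2 = k := ⟨_, rfl⟩
    obtain ⟨l, hl⟩ : ∃ l, b0*d0+b1*d1 = l := ⟨_, rfl⟩
    rw [hk, hl] at h3; omega
  all_goals omega

theorem binary_lattice_not_represented_over_Qsqrtneg2 :
    (¬∃ X : Matrix (Fin 2) (Fin 3) ℂ, (∀ i j, X i j ∈ ringO 2) ∧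
      !![(2 : ℂ), -1 + omg 2; -1 - omg 2, 2] = X * Xᴴ) ∧
    (¬∃ X : Matrix (Fin 2) (Fin 3) ℂ, (∀ i j, X i j ∈ ringO 2) ∧
      !![(2 : ℂ), -1 + omg 2; -1 - omg 2, 2] = X * Matrix.diagonal ![(1 : ℂ), 1, 2] * Xᴴ) := by
  constructor
  · rintro ⟨X, hmem, hX⟩
    obtain ⟨a00, b00, h00⟩ := memO (hmem 0 0)
    obtain ⟨a01, b01, h01⟩ := memO (hmem 0 1)
    obtain ⟨a02, b02, h02⟩ := memO (hmem 0 2)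
    obtain ⟨a10, b10, h10⟩ := memO (hmem 1 0)
    obtain ⟨a11, b11, h11⟩ := memO (hmem 1 1)
    obtain ⟨a12, b12, h12⟩ := memO (hmem 1 2)
    have e00 := congrFun (congrFun hX 0) 0
    have e01 := congrFun (congrFun hX 0) 1
    have e11 := congrFun (congrFun hX 1) 1
    simp only [Matrix.mul_apply, Fin.sum_univ_three, Matrix.conjTranspose_apply,
      Matrix.cons_val', Matrix.cons_val_zero, Matrix.cons_val_one, Matrix.head_cons,
      Matrix.empty_val', Matrix.cons_val_fin_one, Matrix.head_fin_const,
      Matrix.of_apply] at e00 e01 e11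
    simp only [h00, h01, h02, h10, h11, h12, starform, starform'] at e00 e01 e11
    have q1 := injO (a := 2) (b := 0)
      (c := a00^2+a01^2+a02^2+2*(b00^2+b01^2+b02^2)) (d := 0)
      (by push_cast
          linear_combination e00 - ((b00:ℂ)^2+(b01:ℂ)^2+(b02:ℂ)^2) * hw2)
    have q2 := injO (a := 2) (b := 0)
      (c := a10^2+a11^2+a12^2+2*(b10^2+b11^2+b12^2)) (d := 0)
      (by push_cast
          linear_combination e11 - ((b10:ℂ)^2+(b11:ℂ)^2+(b12:ℂ)^2) * hw2)
    have q3 := injO (a := -1) (b := 1)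
      (c := a00*a10+a01*a11+a02*a12+2*(b00*b10+b01*b11+b02*b12))
      (d := b00*a10+b01*a11+b02*a12-(a00*b10+a01*b11+a02*b12))
      (by push_cast
          linear_combination e01 - ((b00:ℂ)*b10+(b01:ℂ)*b11+(b02:ℂ)*b12) * hw2)
    exact int1 q1.1.symm q2.1.symm q3.1.symm q3.2.symm
  · rintro ⟨X, hmem, hX⟩
    obtain ⟨a00, b00, h00⟩ := memO (hmem 0 0)
    obtain ⟨a01, b01, h01⟩ := memO (hmem 0 1)
    obtain ⟨a02, b02, h02⟩ := memO (hmem 0 2)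
    obtain ⟨a10, b10, h10⟩ := memO (hmem 1 0)
    obtain ⟨a11, b11, h11⟩ := memO (hmem 1 1)
    obtain ⟨a12, b12, h12⟩ := memO (hmem 1 2)
    have e00 := congrFun (congrFun hX 0) 0
    have e01 := congrFun (congrFun hX 0) 1
    have e11 := congrFun (congrFun hX 1) 1
    simp only [Matrix.mul_apply, Fin.sum_univ_three, Matrix.conjTranspose_apply,
      Matrix.diagonal, Matrix.cons_val', Matrix.cons_val_zero, Matrix.cons_val_one,
      Matrix.head_cons, Matrix.empty_val', Matrix.cons_val_fin_one, Matrix.head_fin_const,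
      Matrix.of_apply] at e00 e01 e11
    simp at e00 e01 e11
    simp only [h00, h01, h02, h10, h11, h12, starform, starform'] at e00 e01 e11
    have q1 := injO (a := 2) (b := 0)
      (c := a00^2+a01^2+2*a02^2+2*(b00^2+b01^2)+4*b02^2) (d := 0)
      (by push_cast
          linear_combination e00 - ((b00:ℂ)^2+(b01:ℂ)^2+2*(b02:ℂ)^2) * hw2)
    have q2 := injO (a := 2) (b := 0)
      (c := a10^2+a11^2+2*a12^2+2*(b10^2+b11^2)+4*b12^2) (d := 0)
      (by push_cast
          linear_combination e11 - ((b10:ℂ)^2+(b11:ℂ)^2+2*(b12:ℂ)^2) * hw2)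
    have q3 := injO (a := -1) (b := 1)
      (c := a00*a10+a01*a11+2*(a02*a12)+2*(b00*b10+b01*b11)+4*(b02*b12))
      (d := b00*a10+b01*a11+2*(b02*a12)-(a00*b10+a01*b11+2*(a02*b12)))
      (by push_cast
          linear_combination e01 - ((b00:ℂ)*b10+(b01:ℂ)*b11+2*(b02:ℂ)*b12) * hw2)
    exact int2 q1.1.symm q2.1.symm q3.1.symm q3.2.symm
end

section
/- Over the ring of integers 𝒪 = ℤ[ω] of ℚ(√-11), where ω = (1+√-11)/2, neither the binary Hermitian lattice with Gram matrix [[2, ω],[ω̄, 2]] nor the one with Gram matrix [[2, -1+ω],[-1+ω̄, 2]] is represented by ⟨1,1,1⟩ or by ⟨1,1,2⟩. -/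
open Complex Matrix

lemma omg11' : omg 11 = ((1/2 : ℝ) : ℂ) + ((Real.sqrt 11 / 2 : ℝ) : ℂ) * Complex.I := by
  rw [omg]; norm_num; ring

lemma omg11_re : (omg 11).re = 1/2 := by simp [omg11']

lemma omg11_im : (omg 11).im = Real.sqrt 11 / 2 := by simp [omg11']

lemma sqrt11_sq : Real.sqrt 11 * Real.sqrt 11 = 11 :=
  Real.mul_self_sqrt (by norm_num)

lemma omg11_sq : omg 11 * omg 11 = omg 11 - 3 := by
  apply Complex.ext <;>
    simp [omg11', Complex.mul_re, Complex.mul_im, Complex.sub_re, Complex.sub_im] <;>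
    nlinarith [sqrt11_sq]

lemma mem_ringO11 {x : ℂ} (hx : x ∈ ringO 11) : ∃ a b : ℤ, x = (a : ℂ) + (b : ℂ) * omg 11 := by
  induction hx using Algebra.adjoin_induction with
  | mem y hy => exact ⟨0, 1, by simp [Set.mem_singleton_iff.mp hy]⟩
  | algebraMap n => exact ⟨n, 0, by simp⟩
  | add x y _ _ hx hy =>
      obtain ⟨a, b, rfl⟩ := hx; obtain ⟨c, d, rfl⟩ := hy
      exact ⟨a + c, b + d, by push_cast; ring⟩
  | mul x y _ _ hx hy =>
      obtain ⟨a, b, rfl⟩ := hx; obtain ⟨c, d, rfl⟩ := hy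
      refine ⟨a * c - 3 * (b * d), a * d + b * c + b * d, ?_⟩
      push_cast
      linear_combination ((b : ℂ) * d) * omg11_sq

lemma im_eq_zero_of_normSq_le_two {x : ℂ} (hx : x ∈ ringO 11)
    (h2 : Complex.normSq x ≤ 2) : x.im = 0 := by
  obtain ⟨a, b, rfl⟩ := mem_ringO11 hx
  have hre : ((a : ℂ) + (b : ℂ) * omg 11).re = a + b * (1/2) := by
    simp [omg11_re, omg11_im]
  have him : ((a : ℂ) + (b : ℂ) * omg 11).im = b * (Real.sqrt 11 / 2) := by
    simp [omg11_re, omg11_im]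
  rw [Complex.normSq_apply, hre, him] at h2
  rw [him]
  have hb : (b : ℝ) = 0 := by
    by_contra hb
    have hbz : b ≠ 0 := by exact_mod_cast hb
    have hb1 : (1 : ℝ) ≤ (b : ℝ) ^ 2 := by
      have h1 : (1 : ℤ) ≤ |b| := Int.one_le_abs hbz
      have h2' : (1 : ℤ) ≤ b ^ 2 := by nlinarith [_root_.sq_abs b]
      exact_mod_cast h2'
    nlinarith [sqrt11_sq, sq_nonneg ((a : ℝ) + b * (1/2))]
  rw [hb]; ring

lemma key (w : Fin 3 → ℝ) (hw : ∀ j, 1 ≤ w j) (c : ℂ) (hc : c.im ≠ 0)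
    (X : Matrix (Fin 2) (Fin 3) ℂ) (hX : ∀ i j, X i j ∈ ringO 11)
    (h : ∀ i k, !![(2 : ℂ), c; (starRingEnd ℂ) c, 2] i k
        = ∑ j, X i j * ((w j : ℝ) : ℂ) * (starRingEnd ℂ) (X k j)) : False := by
  have hterm : ∀ (x : ℂ) (r : ℝ), x * (r : ℂ) * (starRingEnd ℂ) x
      = ((r * Complex.normSq x : ℝ) : ℂ) := by
    intro x r
    rw [mul_comm x (r : ℂ), mul_assoc, Complex.mul_conj]
    push_cast; ring
  have him : ∀ i j, (X i j).im = 0 := by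
    intro i j
    apply im_eq_zero_of_normSq_le_two (hX i j)
    have h0 := h i i
    rw [Fin.sum_univ_three, hterm, hterm, hterm] at h0
    have h2' : (2 : ℝ) = ∑ k, w k * Complex.normSq (X i k) := by
      rw [Fin.sum_univ_three]
      fin_cases i <;> simp at h0 <;> exact_mod_cast h0
    have hnn : ∀ k, 0 ≤ w k * Complex.normSq (X i k) := fun k =>
      mul_nonneg (le_trans zero_le_one (hw k)) (Complex.normSq_nonneg _)
    have hle : w j * Complex.normSq (X i j) ≤ 2 := by
      rw [h2']
      exact Finset.single_le_sum (fun k _ => hnn k) (Finset.mem_univ j)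
    calc Complex.normSq (X i j) = 1 * Complex.normSq (X i j) := (one_mul _).symm
      _ ≤ w j * Complex.normSq (X i j) :=
          mul_le_mul_of_nonneg_right (hw j) (Complex.normSq_nonneg _)
      _ ≤ 2 := hle
  have h01 := congrArg Complex.im (h 0 1)
  rw [Fin.sum_univ_three] at h01
  simp [Complex.add_im, Complex.mul_im, Complex.mul_re, him] at h01
  exact hc h01

theorem binary_lattices_not_represented_over_Qsqrtneg11 :
    (¬∃ X : Matrix (Fin 2) (Fin 3) ℂ, (∀ i j, X i j ∈ ringO 11) ∧
      !![(2 : ℂ), omg 11; (starRingEnd ℂ) (omg 11), 2] = X * Xᴴ) ∧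
    (¬∃ X : Matrix (Fin 2) (Fin 3) ℂ, (∀ i j, X i j ∈ ringO 11) ∧
      !![(2 : ℂ), omg 11; (starRingEnd ℂ) (omg 11), 2]
        = X * Matrix.diagonal ![(1 : ℂ), 1, 2] * Xᴴ) ∧
    (¬∃ X : Matrix (Fin 2) (Fin 3) ℂ, (∀ i j, X i j ∈ ringO 11) ∧
      !![(2 : ℂ), -1 + omg 11; -1 + (starRingEnd ℂ) (omg 11), 2] = X * Xᴴ) ∧
    (¬∃ X : Matrix (Fin 2) (Fin 3) ℂ, (∀ i j, X i j ∈ ringO 11) ∧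
      !![(2 : ℂ), -1 + omg 11; -1 + (starRingEnd ℂ) (omg 11), 2]
        = X * Matrix.diagonal ![(1 : ℂ), 1, 2] * Xᴴ) := by
  have hsqrt : Real.sqrt 11 / 2 ≠ 0 := by positivity
  have hc1 : (omg 11).im ≠ 0 := by rw [omg11_im]; exact hsqrt
  have hc2 : (-1 + omg 11).im ≠ 0 := by
    rw [show (-1 + omg 11).im = (omg 11).im by simp]; exact hc1
  refine ⟨?_, ?_, ?_, ?_⟩
  · rintro ⟨X, hX, h⟩
    refine key (fun _ => 1) (fun _ => le_refl 1) (omg 11) hc1 X hX fun i k => ?_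
    rw [h]
    simp [Matrix.mul_apply, Matrix.conjTranspose_apply]
  · rintro ⟨X, hX, h⟩
    refine key ![1, 1, 2] (fun j => by fin_cases j <;> simp) (omg 11) hc1 X hX fun i k => ?_
    rw [h]
    simp [Matrix.mul_apply, Matrix.diagonal_apply, Matrix.conjTranspose_apply,
      Fin.sum_univ_three]
  · rintro ⟨X, hX, h⟩
    refine key (fun _ => 1) (fun _ => le_refl 1) (-1 + omg 11) hc2 X hX fun i k => ?_
    rw [show (starRingEnd ℂ) (-1 + omg 11) = -1 + (starRingEnd ℂ) (omg 11) by simp, h]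
    simp [Matrix.mul_apply, Matrix.conjTranspose_apply]
  · rintro ⟨X, hX, h⟩
    refine key ![1, 1, 2] (fun j => by fin_cases j <;> simp) (-1 + omg 11) hc2 X hX fun i k => ?_
    rw [show (starRingEnd ℂ) (-1 + omg 11) = -1 + (starRingEnd ℂ) (omg 11) by simp, h]
    simp [Matrix.mul_apply, Matrix.diagonal_apply, Matrix.conjTranspose_apply,
      Fin.sum_univ_three]
end

section
/- Over the Gaussian integers ℤ[i], the binary Hermitian lattice with Gram matrix [[2,1],[1,2]] is not represented by the ternary Hermitian lattice ⟨1,1,2⟩. -/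
open Complex Matrix

lemma mem_ringO_one {z : ℂ} (hz : z ∈ ringO 1) : ∃ a b : ℤ, z = a + b * I := by
  have homg : omg 1 = I := by simp [omg, Real.sqrt_one]
  rw [ringO, homg] at hz
  induction hz using Algebra.adjoin_induction with
  | mem x hx => rcases hx with rfl; exact ⟨0, 1, by simp⟩
  | algebraMap n => exact ⟨n, 0, by simp⟩
  | add x y _ _ hx hy =>
    obtain ⟨a, b, rfl⟩ := hx
    obtain ⟨c, d, rfl⟩ := hy
    exact ⟨a + c, b + d, by push_cast; ring⟩
  | mul x y _ _ hx hy =>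
    obtain ⟨a, b, rfl⟩ := hx
    obtain ⟨c, d, rfl⟩ := hy
    exact ⟨a * c - b * d, a * d + b * c, by push_cast; ring_nf; simp [I_sq]; ring⟩

lemma key2 : ∀ a0 b0 a1 b1 c0 e0 c1 e1 : ZMod 2,
    a0+b0+a1+b1 = 0 → c0+e0+c1+e1 = 0 →
    a0*c0+b0*e0+a1*c1+b1*e1 + (b0*c0+a0*e0+b1*c1+a1*e1) = 1 → False := by
  decide

lemma key_int (a0 b0 a1 b1 a2 b2 c0 e0 c1 e1 c2 e2 : ℤ)
    (h1 : a0*a0+b0*b0+a1*a1+b1*b1+2*(a2*a2+b2*b2) = 2)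
    (h2 : c0*c0+e0*e0+c1*c1+e1*e1+2*(c2*c2+e2*e2) = 2)
    (h3 : a0*c0+b0*e0+a1*c1+b1*e1+2*(a2*c2+b2*e2) = 1)
    (h4 : b0*c0-a0*e0+b1*c1-a1*e1+2*(b2*c2-a2*e2) = 0) : False := by
  have sq : ∀ x : ZMod 2, x * x = x := by decide
  have two : (2 : ZMod 2) = 0 := rfl
  have H1 := congrArg (fun n : ℤ => (n : ZMod 2)) h1
  have H2 := congrArg (fun n : ℤ => (n : ZMod 2)) h2
  have H3 := congrArg (fun n : ℤ => (n : ZMod 2)) (congrArg₂ (· + ·) h3 h4)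
  push_cast at H1 H2 H3
  refine key2 a0 b0 a1 b1 c0 e0 c1 e1 ?_ ?_ ?_
  · linear_combination H1 - sq (a0:ZMod 2) - sq (b0:ZMod 2) - sq (a1:ZMod 2) - sq (b1:ZMod 2)
      + (1 - (a2:ZMod 2)*a2 - (b2:ZMod 2)*b2) * two
  · linear_combination H2 - sq (c0:ZMod 2) - sq (e0:ZMod 2) - sq (c1:ZMod 2) - sq (e1:ZMod 2)
      + (1 - (c2:ZMod 2)*c2 - (e2:ZMod 2)*e2) * two
  · linear_combination H3 + ((a0:ZMod 2)*e0 + (a1:ZMod 2)*e1 - (a2:ZMod 2)*c2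
      + (a2:ZMod 2)*e2 - (b2:ZMod 2)*c2 - (b2:ZMod 2)*e2) * two

theorem gram_2112_not_represented_by_diag112_gaussian :
    ¬∃ X : Matrix (Fin 2) (Fin 3) ℂ, (∀ i j, X i j ∈ ringO 1) ∧
      !![(2 : ℂ), 1; 1, 2] = X * Matrix.diagonal ![(1 : ℂ), 1, 2] * Xᴴ := by
  rintro ⟨X, hX, h⟩
  obtain ⟨a0, b0, hv0⟩ := mem_ringO_one (hX 0 0)
  obtain ⟨a1, b1, hv1⟩ := mem_ringO_one (hX 0 1)
  obtain ⟨a2, b2, hv2⟩ := mem_ringO_one (hX 0 2)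
  obtain ⟨c0, e0, hw0⟩ := mem_ringO_one (hX 1 0)
  obtain ⟨c1, e1, hw1⟩ := mem_ringO_one (hX 1 1)
  obtain ⟨c2, e2, hw2⟩ := mem_ringO_one (hX 1 2)
  have h00 := congrFun (congrFun h 0) 0
  have h11 := congrFun (congrFun h 1) 1
  have h01 := congrFun (congrFun h 0) 1
  simp [Matrix.mul_apply, Matrix.diagonal_apply, Fin.sum_univ_three,
    Matrix.conjTranspose_apply] at h00 h11 h01
  simp only [hv0, hv1, hv2, hw0, hw1, hw2] at h00 h11 h01
  simp [Complex.ext_iff, Complex.add_re, Complex.add_im, Complex.mul_re,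
    Complex.mul_im] at h00 h11 h01
  obtain ⟨h00r, -⟩ := h00
  obtain ⟨h11r, -⟩ := h11
  obtain ⟨h01r, h01i⟩ := h01
  have H1 : a0*a0+b0*b0+a1*a1+b1*b1+2*(a2*a2+b2*b2) = 2 := by
    exact_mod_cast (by push_cast at h00r ⊢; linarith :
      ((a0*a0+b0*b0+a1*a1+b1*b1+2*(a2*a2+b2*b2) : ℤ) : ℝ) = 2)
  have H2 : c0*c0+e0*e0+c1*c1+e1*e1+2*(c2*c2+e2*e2) = 2 := by
    exact_mod_cast (by push_cast at h11r ⊢; linarith :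
      ((c0*c0+e0*e0+c1*c1+e1*e1+2*(c2*c2+e2*e2) : ℤ) : ℝ) = 2)
  have H3 : a0*c0+b0*e0+a1*c1+b1*e1+2*(a2*c2+b2*e2) = 1 := by
    exact_mod_cast (by push_cast at h01r ⊢; linarith :
      ((a0*c0+b0*e0+a1*c1+b1*e1+2*(a2*c2+b2*e2) : ℤ) : ℝ) = 1)
  have H4 : b0*c0-a0*e0+b1*c1-a1*e1+2*(b2*c2-a2*e2) = 0 := by
    exact_mod_cast (by push_cast at h01i ⊢; linarith :
      ((b0*c0-a0*e0+b1*c1-a1*e1+2*(b2*c2-a2*e2) : ℤ) : ℝ) = 0)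
  exact key_int a0 b0 a1 b1 a2 b2 c0 e0 c1 e1 c2 e2 H1 H2 H3 H4
end

section
/- Let L be a Hermitian ℤ[i]-lattice with basis v₁,…,vₙ such that H(vⱼ) is odd for each j. Then the set Lₑ of vectors of L with even Hermitian norm is a sublattice of L with ℤ[i]-basis v₁-v₂, v₂-v₃, …, v_{n-1}-vₙ, v_{n-1}+i·vₙ. -/
open Matrix

open Finset

/-- The basis vectors v₁-v₂, v₂-v₃, …, v_{n-1}-vₙ, v_{n-1}+i·vₙ of the even sublattice,
written in coordinates with respect to the basis v₁, …, vₙ (so vⱼ ↦ eⱼ). -/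
noncomputable def evenBasis (n : ℕ) : Fin n → (Fin n → GaussianInt) := fun j =>
  if h : (j : ℕ) + 1 < n then
    Pi.single j 1 - Pi.single (⟨(j : ℕ) + 1, h⟩ : Fin n) 1
  else
    Pi.single (⟨n - 2, by have := j.isLt; omega⟩ : Fin n) 1 +
      Pi.single (⟨n - 1, by have := j.isLt; omega⟩ : Fin n) (⟨0, 1⟩ : GaussianInt)

noncomputable def gq : GaussianInt →+* ZMod 2 where
  toFun z := (z.re : ZMod 2) + (z.im : ZMod 2)
  map_one' := by simp
  map_mul' z w := by
    have h2 : (2 : ZMod 2) = 0 := rfl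
    simp only [Zsqrtd.re_mul, Zsqrtd.im_mul]; push_cast
    linear_combination (-((z.im : ZMod 2) * (w.im : ZMod 2))) * h2
  map_zero' := by simp
  map_add' z w := by simp only [Zsqrtd.re_add, Zsqrtd.im_add]; push_cast; ring

lemma gq_apply (z : GaussianInt) : gq z = (z.re : ZMod 2) + (z.im : ZMod 2) := rfl

lemma gq_star (z : GaussianInt) : gq (star z) = gq z := by
  have h2 : (2 : ZMod 2) = 0 := rfl
  have h1 : (star z).re = z.re := rfl
  have h3 : (star z).im = -z.im := rfl
  rw [gq_apply, gq_apply, h1, h3]; push_cast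
  linear_combination (-(z.im : ZMod 2)) * h2

lemma gq_two : gq 2 = 0 := by rw [gq_apply]; decide

lemma zmod2_quad {n : ℕ} (a : Fin n → ZMod 2) (m : Matrix (Fin n) (Fin n) (ZMod 2))
    (hsym : ∀ i j, m i j = m j i) (hdiag : ∀ i, m i i = 1) :
    ∑ i, ∑ j, a i * m i j * a j = ∑ i, a i := by
  have hsq : ∀ x : ZMod 2, x * x = x := by decide
  rw [← Finset.sum_product' (univ) (univ) (fun i j => a i * m i j * a j),
      ← Finset.diag_union_offDiag (univ : Finset (Fin n)),
      Finset.sum_union (Finset.disjoint_diag_offDiag _), Finset.sum_diag]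
  have hoff : ∑ p ∈ (univ : Finset (Fin n)).offDiag, a p.1 * m p.1 p.2 * a p.2 = 0 := by
    apply Finset.sum_involution (fun p _ => (p.2, p.1))
    · intro p _
      have : a p.2 * m p.2 p.1 * a p.1 = a p.1 * m p.1 p.2 * a p.2 := by
        rw [hsym p.2 p.1]; ring
      rw [this]; exact CharTwo.add_self_eq_zero _
    · intro p hp _
      simp only [Finset.mem_offDiag] at hp
      intro hEq
      exact hp.2.2 (congrArg Prod.fst hEq).symm
    · intro p hp
      simp only [Finset.mem_offDiag] at hp ⊢
      exact ⟨hp.2.1, hp.1, fun h => hp.2.2 h.symm⟩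
    · intro p _; rfl
  rw [hoff, add_zero]
  exact Finset.sum_congr rfl fun i _ => by rw [hdiag, mul_one, hsq]

lemma norm_criterion {n : ℕ} (M : Matrix (Fin n) (Fin n) GaussianInt) (hM : M.IsHermitian)
    (hodd : ∀ j, ∃ k : ℤ, M j j = 2 * k + 1) (x : Fin n → GaussianInt) :
    (∃ k : ℤ, (∑ i, ∑ j, x i * M i j * star (x j)) = 2 * k) ↔ gq (∑ i, x i) = 0 := by
  set S := ∑ i, ∑ j, x i * M i j * star (x j) with hS
  have hMsym : ∀ i j, star (M i j) = M j i := fun i j => by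
    conv_rhs => rw [← hM]
    rfl
  have hself : star S = S := by
    rw [hS, star_sum]
    rw [Finset.sum_comm]
    apply Finset.sum_congr rfl; intro j _
    rw [star_sum]
    apply Finset.sum_congr rfl; intro i _
    rw [StarMul.star_mul, StarMul.star_mul, star_star, hMsym]
    ring
  have him : S.im = 0 := by
    have := congrArg Zsqrtd.im hself
    have h2 : (star S).im = -S.im := rfl
    rw [h2] at this; omega
  have hgqS : gq S = gq (∑ i, x i) := by
    rw [hS, map_sum]
    have : ∀ i, gq (∑ j, x i * M i j * star (x j))
        = ∑ j, gq (x i) * gq (M i j) * gq (x j) := by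
      intro i; rw [map_sum]
      exact Finset.sum_congr rfl fun j _ => by
        rw [_root_.map_mul, _root_.map_mul, gq_star]
    simp only [this]
    rw [zmod2_quad (fun i => gq (x i)) (fun i j => gq (M i j))
        (fun i j => by show gq (M i j) = gq (M j i); rw [← hMsym j i, gq_star])
        (fun i => by
          show gq (M i i) = 1
          obtain ⟨k, hk⟩ := hodd i
          rw [hk, _root_.map_add, _root_.map_mul, _root_.map_one,
            gq_two, zero_mul, zero_add]),
        map_sum]
  constructor
  · rintro ⟨k, hk⟩
    rw [← hgqS, hk, _root_.map_mul, gq_two, zero_mul]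
  · intro h
    rw [← hgqS, gq_apply, him] at h
    simp only [Int.cast_zero, add_zero] at h
    rw [ZMod.intCast_zmod_eq_zero_iff_dvd] at h
    obtain ⟨k, hk⟩ := h
    refine ⟨k, ?_⟩
    ext
    · simpa [Zsqrtd.re_mul] using hk
    · simp [Zsqrtd.im_mul, him]

section
-- sum of coordinates of a single
lemma sum_single {n : ℕ} (j : Fin n) (c : GaussianInt) :
    ∑ i, Pi.single j c i = c := by
  rw [Finset.sum_pi_single']
  simp

-- the even submodule
noncomputable def evenSub (n : ℕ) : Submodule GaussianInt (Fin n → GaussianInt) where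
  carrier := {x | gq (∑ i, x i) = 0}
  add_mem' {a b} ha hb := by
    simp only [Set.mem_setOf_eq] at *
    rw [show (∑ i, (a + b) i) = (∑ i, a i) + (∑ i, b i) by
      rw [← Finset.sum_add_distrib]; rfl, map_add, ha, hb, add_zero]
  zero_mem' := by simp
  smul_mem' c x hx := by
    simp only [Set.mem_setOf_eq] at *
    rw [show (∑ i, (c • x) i) = c * ∑ i, x i by
      rw [Finset.mul_sum]; rfl, _root_.map_mul, hx, mul_zero]

set_option linter.unusedVariables false in
lemma evenBasis_mem {n : ℕ} (hn : 2 ≤ n) (j : Fin n) : evenBasis n j ∈ evenSub n := by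
  show gq (∑ i, evenBasis n j i) = 0
  unfold evenBasis
  split_ifs with h
  · simp only [Pi.sub_apply]
    rw [Finset.sum_sub_distrib, sum_single, sum_single, sub_self, map_zero]
  · simp only [Pi.add_apply]
    rw [Finset.sum_add_distrib, sum_single, sum_single, _root_.map_add]
    decide

lemma diff_mem {n : ℕ} (hn : 2 ≤ n) :
    ∀ (d : ℕ) (i : Fin n), (i:ℕ) + d = n - 1 →
      Pi.single i 1 - Pi.single (⟨n-1, by omega⟩ : Fin n) 1
        ∈ Submodule.span GaussianInt (Set.range (evenBasis n)) := by
  intro d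
  induction d with
  | zero =>
    intro i hi
    have : i = (⟨n-1, by omega⟩ : Fin n) := Fin.ext (by show (i:ℕ) = n-1; omega)
    rw [this, sub_self]
    exact zero_mem _
  | succ d ih =>
    intro i hi
    have h1 : (i:ℕ) + 1 < n := by omega
    have key : evenBasis n i = Pi.single i 1 - Pi.single (⟨(i:ℕ)+1, h1⟩ : Fin n) 1 := by
      unfold evenBasis; rw [dif_pos h1]
    have hsplit : Pi.single i (1:GaussianInt) - Pi.single (⟨n-1, by omega⟩ : Fin n) 1
        = evenBasis n i + (Pi.single (⟨(i:ℕ)+1, h1⟩ : Fin n) 1 - Pi.single (⟨n-1, by omega⟩ : Fin n) 1) := by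
      rw [key]; abel
    rw [hsplit]
    exact add_mem (Submodule.subset_span ⟨i, rfl⟩) (ih ⟨(i:ℕ)+1, h1⟩ (by show (i:ℕ)+1+d = n-1; omega))

lemma last_mem {n : ℕ} (hn : 2 ≤ n) :
    Pi.single (⟨n-1, by omega⟩ : Fin n) (⟨1,1⟩ : GaussianInt)
      ∈ Submodule.span GaussianInt (Set.range (evenBasis n)) := by
  have h2 : (n-2 : ℕ) + 1 < n := by omega
  have e1 : evenBasis n (⟨n-1, by omega⟩ : Fin n)
      = Pi.single (⟨n-2, by omega⟩ : Fin n) 1 + Pi.single (⟨n-1, by omega⟩ : Fin n) (⟨0,1⟩ : GaussianInt) := by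
    unfold evenBasis; rw [dif_neg (by simp; omega)]
  have e2 : evenBasis n (⟨n-2, by omega⟩ : Fin n)
      = Pi.single (⟨n-2, by omega⟩ : Fin n) 1 - Pi.single (⟨n-1, by omega⟩ : Fin n) 1 := by
    unfold evenBasis
    rw [dif_pos (show ((⟨n-2, by omega⟩ : Fin n) : ℕ) + 1 < n from h2)]
    have h3 : (⟨((⟨n-2, by omega⟩ : Fin n) : ℕ) + 1, h2⟩ : Fin n) = (⟨n-1, by omega⟩ : Fin n) :=
      Fin.ext (by show n-2+1 = n-1; omega)
    rw [h3]
  have key : Pi.single (⟨n-1, by omega⟩ : Fin n) (⟨1,1⟩ : GaussianInt)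
      = evenBasis n (⟨n-1, by omega⟩ : Fin n) - evenBasis n (⟨n-2, by omega⟩ : Fin n) := by
    rw [e1, e2]
    have : (⟨1,1⟩ : GaussianInt) = ⟨0,1⟩ + 1 := by decide
    rw [this, Pi.single_add]
    abel
  rw [key]
  exact sub_mem (Submodule.subset_span ⟨_, rfl⟩) (Submodule.subset_span ⟨_, rfl⟩)

lemma gq_dvd_iff (z : GaussianInt) : (⟨1,1⟩ : GaussianInt) ∣ z ↔ gq z = 0 := by
  constructor
  · rintro ⟨w, rfl⟩
    rw [_root_.map_mul]
    have : gq (⟨1,1⟩ : GaussianInt) = 0 := by decide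
    rw [this, zero_mul]
  · intro h
    have h2 : ((z.re + z.im : ℤ) : ZMod 2) = 0 := by push_cast; exact h
    rw [ZMod.intCast_zmod_eq_zero_iff_dvd] at h2
    obtain ⟨m, hm⟩ := h2
    refine ⟨⟨(z.re + z.im)/2, (z.im - z.re)/2⟩, ?_⟩
    ext <;> simp [Zsqrtd.re_mul, Zsqrtd.im_mul] <;> omega

lemma evenSub_le_span {n : ℕ} (hn : 2 ≤ n) :
    evenSub n ≤ Submodule.span GaussianInt (Set.range (evenBasis n)) := by
  intro x hx
  have hx' : (⟨1,1⟩ : GaussianInt) ∣ ∑ i, x i := (gq_dvd_iff _).2 hx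
  obtain ⟨w, hw⟩ := hx'
  set last : Fin n := ⟨n-1, by omega⟩ with hlast
  have hA : ∑ i, x i • (Pi.single i 1 : Fin n → GaussianInt) = x := by
    conv_rhs => rw [← Finset.univ_sum_single x]
    exact Finset.sum_congr rfl fun i _ => by rw [← Pi.single_smul, smul_eq_mul, mul_one]
  have hdecomp : x = (∑ i, x i • ((Pi.single i 1 : Fin n → GaussianInt) - Pi.single last 1)) + (∑ i, x i) • (Pi.single last 1 : Fin n → GaussianInt) := by
    simp only [smul_sub]
    rw [Finset.sum_sub_distrib, ← Finset.sum_smul, hA]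
    abel
  rw [hdecomp]
  refine add_mem (Submodule.sum_mem _ fun i _ =>
    Submodule.smul_mem _ _ (diff_mem hn (n-1-(i:ℕ)) i (by omega))) ?_
  have hw2 : (∑ i, x i) • (Pi.single last 1 : Fin n → GaussianInt) = w • (Pi.single last ⟨1,1⟩ : Fin n → GaussianInt) := by
    rw [hw, ← Pi.single_smul, ← Pi.single_smul, smul_eq_mul, smul_eq_mul, mul_one, mul_comm]
  rw [hw2]
  exact Submodule.smul_mem _ _ (last_mem hn)

open GaussianInt in
lemma lin_indep {n : ℕ} (hn : 2 ≤ n) : LinearIndependent GaussianInt (evenBasis n) := by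
  classical
  set B : Fin n → (Fin n → ℂ) := fun j k => toComplex (evenBasis n j k) with hB
  have hpush : ∀ y, y ∈ Submodule.span GaussianInt (Set.range (evenBasis n)) →
      (fun i => toComplex (y i)) ∈ Submodule.span ℂ (Set.range B) := by
    intro y hy
    induction hy using Submodule.span_induction with
    | mem x h =>
      obtain ⟨j, rfl⟩ := h
      exact Submodule.subset_span ⟨j, rfl⟩
    | zero =>
      convert zero_mem (Submodule.span ℂ (Set.range B)) using 1
      funext i; simp
    | add x z hx hz ihx ihz =>
      have : (fun i => toComplex ((x + z) i)) = (fun i => toComplex (x i)) + fun i => toComplex (z i) := by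
        funext i; simp [Pi.add_apply]
      rw [this]; exact add_mem ihx ihz
    | smul a x hx ihx =>
      have : (fun i => toComplex ((a • x) i)) = toComplex a • fun i => toComplex (x i) := by
        funext i; simp [Pi.smul_apply, smul_eq_mul]
      rw [this]; exact Submodule.smul_mem _ _ ihx
  have hsingle : ∀ k : Fin n, (Pi.single k 1 : Fin n → ℂ) ∈ Submodule.span ℂ (Set.range B) := by
    intro k
    have hmem : (Pi.single k ⟨1,1⟩ : Fin n → GaussianInt) ∈ evenSub n := by
      show gq (∑ i, (Pi.single k ⟨1,1⟩ : Fin n → GaussianInt) i) = 0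
      rw [sum_single]; decide
    have hmem2 := hpush _ (evenSub_le_span hn hmem)
    have hne : (1 + Complex.I) ≠ 0 := by
      intro h
      have := congrArg Complex.re h
      simp at this
    have heq : (Pi.single k 1 : Fin n → ℂ)
        = (1 + Complex.I)⁻¹ • fun i => toComplex ((Pi.single k ⟨1,1⟩ : Fin n → GaussianInt) i) := by
      funext i
      by_cases h : i = k
      · subst h
        simp only [Pi.single_eq_same, Pi.smul_apply, smul_eq_mul]
        rw [toComplex_def]
        simp [inv_mul_cancel₀ hne]
      · simp [Pi.single_eq_of_ne h]
    rw [heq]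
    exact Submodule.smul_mem _ _ hmem2
  have htop : ⊤ ≤ Submodule.span ℂ (Set.range B) := by
    rw [← (Pi.basisFun ℂ (Fin n)).span_eq]
    apply Submodule.span_le.2
    rintro _ ⟨k, rfl⟩
    rw [Pi.basisFun_apply]
    exact hsingle k
  have hcard : Fintype.card (Fin n) = Module.finrank ℂ (Fin n → ℂ) := by
    simp [Module.finrank_fintype_fun_eq_card]
  have hBli : LinearIndependent ℂ B := linearIndependent_of_top_le_span_of_card_eq_finrank htop hcard
  rw [Fintype.linearIndependent_iff] at hBli ⊢
  intro c hc j
  have hC : ∀ j, toComplex (c j) = 0 := by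
    apply hBli
    funext k
    have := congrFun hc k
    rw [Finset.sum_apply] at this
    have h2 := congrArg toComplex this
    rw [_root_.map_sum] at h2
    simp only [Pi.zero_apply, _root_.map_zero] at h2
    show (∑ i, toComplex (c i) • B i) k = (0:ℂ)
    rw [Finset.sum_apply, ← h2]
    exact Finset.sum_congr rfl fun j _ => by
      simp [Pi.smul_apply, smul_eq_mul, hB]
  exact toComplex_inj.1 (by rw [hC j, toComplex_zero])

end

/-- If L is a Hermitian ℤ[i]-lattice with basis v₁,…,vₙ, all of odd norm, then the set of
vectors of even norm is the sublattice with basis v₁-v₂, …, v_{n-1}-vₙ, v_{n-1}+i·vₙ.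
Here the Hermitian form is given by the Gram matrix M, H(x) = ∑ᵢⱼ xᵢ Mᵢⱼ x̄ⱼ. -/
theorem even_sublattice_basis (n : ℕ) (hn : 2 ≤ n)
    (M : Matrix (Fin n) (Fin n) GaussianInt) (hM : M.IsHermitian)
    (hodd : ∀ j, ∃ k : ℤ, M j j = 2 * k + 1) :
    LinearIndependent GaussianInt (evenBasis n) ∧
    ((Submodule.span GaussianInt (Set.range (evenBasis n)) : Set (Fin n → GaussianInt))
      = {x : Fin n → GaussianInt |
          ∃ k : ℤ, (∑ i, ∑ j, x i * M i j * star (x j)) = 2 * k}) := by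
  refine ⟨lin_indep hn, ?_⟩
  ext x
  simp only [Set.mem_setOf_eq, SetLike.mem_coe]
  rw [norm_criterion M hM hodd x]
  constructor
  · intro hx
    exact Submodule.span_le.2 (by rintro _ ⟨j, rfl⟩; exact evenBasis_mem hn j) hx
  · intro hx
    exact evenSub_le_span hn hx
end

section
/- Over the Eisenstein integers 𝒪 = ℤ[(1+√-3)/2]: if L is a positive definite Hermitian 𝒪-lattice that represents ⟨1,1⟩ and ⟨1,2⟩, and if it is known that both ⟨1,1,1⟩ and ⟨1,1,2⟩ are 2-universal over 𝒪, then L is 2-universal. -/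
open Complex Matrix
open scoped ComplexOrder

/-- The Hermitian lattice with Gram matrix M represents the lattice with Gram matrix B
(Gram matrices of generating sets, entries in 𝒪 = ℤ[(1+√-3)/2]). -/
def Represents {d k : ℕ} (M : Matrix (Fin d) (Fin d) ℂ) (B : Matrix (Fin k) (Fin k) ℂ) :
    Prop :=
  ∃ X : Matrix (Fin k) (Fin d) ℂ, (∀ i j, X i j ∈ ringO 3) ∧ B = X * M * Xᴴ

/-- 2-universal: represents every positive definite binary Hermitian 𝒪-lattice
(formal Gram matrix of rank 2, possibly of a nonfree lattice). -/
def TwoUniversal {d : ℕ} (M : Matrix (Fin d) (Fin d) ℂ) : Prop :=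
  ∀ (k : ℕ) (B : Matrix (Fin k) (Fin k) ℂ),
    (∀ i j, B i j ∈ ringO 3) → B.PosSemidef → B.rank = 2 → Represents M B

lemma omg3_def : omg 3 = (1 + Real.sqrt 3 * Complex.I) / 2 := by simp [omg]
lemma omg3_sq : (omg 3) ^ 2 = omg 3 - 1 := by
  have h3 : (Real.sqrt 3 : ℂ) ^ 2 = 3 := by
    rw [← Complex.ofReal_pow, Real.sq_sqrt (by norm_num)]; norm_num
  rw [omg3_def]
  linear_combination (Complex.I^2/4) * h3 + (3/4) * Complex.I_sq
lemma omg3_star : star (omg 3) = 1 - omg 3 := by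
  rw [omg3_def]
  simp [Complex.ext_iff]
  ring_nf
  simp

lemma mem_ringO3 {a : ℂ} (ha : a ∈ ringO 3) : ∃ x y : ℤ, a = (x : ℂ) + (y : ℂ) * omg 3 := by
  induction ha using Algebra.adjoin_induction with
  | mem z hz => exact ⟨0, 1, by simp [Set.mem_singleton_iff.mp hz]⟩
  | algebraMap r => exact ⟨r, 0, by simp⟩
  | add u v hu hv ihu ihv =>
      obtain ⟨x1, y1, rfl⟩ := ihu; obtain ⟨x2, y2, rfl⟩ := ihv
      exact ⟨x1 + x2, y1 + y2, by push_cast; ring⟩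
  | mul u v hu hv ihu ihv =>
      obtain ⟨x1, y1, rfl⟩ := ihu; obtain ⟨x2, y2, rfl⟩ := ihv
      refine ⟨x1 * x2 - y1 * y2, x1 * y2 + y1 * x2 + y1 * y2, ?_⟩
      push_cast
      linear_combination (y1 : ℂ) * y2 * omg3_sq

lemma ringO3_mem {x y : ℤ} : (x : ℂ) + (y : ℂ) * omg 3 ∈ ringO 3 := by
  have h1 : omg 3 ∈ ringO 3 := Algebra.subset_adjoin rfl
  have hx : (x : ℂ) ∈ ringO 3 := by
    simpa using Subalgebra.algebraMap_mem (ringO 3) x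
  have hy : (y : ℂ) ∈ ringO 3 := by
    simpa using Subalgebra.algebraMap_mem (ringO 3) y
  exact add_mem hx (mul_mem hy h1)

lemma star_mem_ringO3 {a : ℂ} (ha : a ∈ ringO 3) : star a ∈ ringO 3 := by
  obtain ⟨x, y, rfl⟩ := mem_ringO3 ha
  have : star ((x : ℂ) + (y : ℂ) * omg 3) = ((x + y : ℤ) : ℂ) + ((-y : ℤ) : ℂ) * omg 3 := by
    simp [star_add, StarMul.star_mul, omg3_star]
    push_cast
    ring
  rw [this]; exact ringO3_mem

lemma norm_ringO3 {a : ℂ} (ha : a ∈ ringO 3) :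
    ∃ n : ℕ, a * star a = (n : ℂ) ∧ n ≠ 2 := by
  obtain ⟨x, y, rfl⟩ := mem_ringO3 ha
  have hval : ((x : ℂ) + (y : ℂ) * omg 3) * star ((x : ℂ) + (y : ℂ) * omg 3)
      = ((x ^ 2 + x * y + y ^ 2 : ℤ) : ℂ) := by
    simp only [star_add, StarMul.star_mul, omg3_star, Complex.star_def, map_intCast (starRingEnd ℂ)]
    push_cast
    linear_combination (-(y:ℂ)^2) * omg3_sq
  have hnn : 0 ≤ x ^ 2 + x * y + y ^ 2 := by nlinarith [sq_nonneg (x + y), sq_nonneg x, sq_nonneg y]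
  refine ⟨(x ^ 2 + x * y + y ^ 2).toNat, ?_, ?_⟩
  · rw [hval]; norm_cast; rw [Int.toNat_of_nonneg hnn]
  · intro h2
    have : x ^ 2 + x * y + y ^ 2 = 2 := by omega
    have h3 : ((x - y : ℤ) : ZMod 3) ^ 2 = 2 := by
      have : ((x ^ 2 + x * y + y ^ 2 : ℤ) : ZMod 3) = 2 := by rw [this]; norm_num
      calc ((x - y : ℤ) : ZMod 3) ^ 2
          = ((x ^ 2 + x * y + y ^ 2 : ℤ) : ZMod 3) + 3 * ((x : ZMod 3) * y) - 2*3*((x:ZMod 3)*y) := by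
            push_cast; ring
        _ = 2 := by rw [this]; norm_num; ring_nf; rw [show (3 : ZMod 3) = 0 by rfl]; ring
    revert h3
    generalize ((x - y : ℤ) : ZMod 3) = z
    revert z; decide


lemma zero_of_mul_star_self_eq_zero {a : ℂ} (h : a * star a = 0) : a = 0 := by
  rcases mul_eq_zero.mp h with h | h
  · exact h
  · exact star_eq_zero.mp h

lemma matmul_mem_ringO3 {k l m : ℕ} {A : Matrix (Fin k) (Fin l) ℂ} {B : Matrix (Fin l) (Fin m) ℂ}
    (hA : ∀ i j, A i j ∈ ringO 3) (hB : ∀ i j, B i j ∈ ringO 3) :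
    ∀ i j, (A * B) i j ∈ ringO 3 := fun i j => by
  rw [Matrix.mul_apply]
  exact Subalgebra.sum_mem _ fun t _ => mul_mem (hA _ _) (hB _ _)

lemma conjT_mem_ringO3 {k l : ℕ} {A : Matrix (Fin k) (Fin l) ℂ}
    (hA : ∀ i j, A i j ∈ ringO 3) : ∀ i j, Aᴴ i j ∈ ringO 3 := fun i j => by
  rw [Matrix.conjTranspose_apply]
  exact star_mem_ringO3 (hA j i)

lemma rep_trans {d k3 k : ℕ} {M : Matrix (Fin d) (Fin d) ℂ} {D : Matrix (Fin k3) (Fin k3) ℂ}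
    {B : Matrix (Fin k) (Fin k) ℂ} (h1 : Represents M D) (h2 : Represents D B) :
    Represents M B := by
  obtain ⟨W, hW, rfl⟩ := h1
  obtain ⟨Z, hZ, rfl⟩ := h2
  refine ⟨Z * W, matmul_mem_ringO3 hZ hW, ?_⟩
  simp only [Matrix.conjTranspose_mul, Matrix.mul_assoc]

theorem two_universal_criterion_eisenstein
    (h111 : TwoUniversal (Matrix.diagonal ![(1 : ℂ), 1, 1]))
    (h112 : TwoUniversal (Matrix.diagonal ![(1 : ℂ), 1, 2]))
    (d : ℕ) (M : Matrix (Fin d) (Fin d) ℂ)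
    (hM : ∀ i j, M i j ∈ ringO 3) (hpsd : M.PosSemidef)
    (h11 : Represents M (1 : Matrix (Fin 2) (Fin 2) ℂ))
    (h12 : Represents M (Matrix.diagonal ![(1 : ℂ), 2])) :
    TwoUniversal M := by
  obtain ⟨X, hXmem, hXI⟩ := h11
  obtain ⟨Y, hYmem, hYD⟩ := h12
  -- the projection matrix
  set C : Matrix (Fin 2) (Fin 2) ℂ := Y * M * Xᴴ with hC
  have hCmem : ∀ i j, C i j ∈ ringO 3 :=
    matmul_mem_ringO3 (matmul_mem_ringO3 hYmem hM) (conjT_mem_ringO3 hXmem)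
  set Y' : Matrix (Fin 2) (Fin d) ℂ := Y - C * X with hY'
  have hY'mem : ∀ i j, Y' i j ∈ ringO 3 := fun i j => by
    rw [hY']
    exact sub_mem (hYmem i j) (matmul_mem_ringO3 hCmem hXmem i j)
  have hXMY : X * M * Yᴴ = Cᴴ := by
    rw [hC]
    simp [Matrix.conjTranspose_mul, Matrix.mul_assoc, hpsd.1.eq]
  have hY'X : Y' * M * Xᴴ = 0 := by
    rw [hY', Matrix.sub_mul, Matrix.sub_mul]
    have : C * X * M * Xᴴ = C := by
      rw [Matrix.mul_assoc, Matrix.mul_assoc, ← Matrix.mul_assoc X M Xᴴ, ← hXI, Matrix.mul_one]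
    rw [this, ← hC]
    simp
  have hXY' : X * M * Y'ᴴ = 0 := by
    have h := congrArg Matrix.conjTranspose hY'X
    simpa [Matrix.conjTranspose_mul, Matrix.mul_assoc, hpsd.1.eq] using h
  set G : Matrix (Fin 2) (Fin 2) ℂ := Matrix.diagonal ![1, 2] - C * Cᴴ with hG
  have hYY : Y' * M * Y'ᴴ = G := by
    rw [hY', hG]
    rw [Matrix.conjTranspose_sub, Matrix.conjTranspose_mul]
    rw [Matrix.sub_mul, Matrix.sub_mul, Matrix.mul_sub, Matrix.mul_sub]
    have e1 : Y * M * Yᴴ = Matrix.diagonal ![1, 2] := hYD.symm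
    have e2 : Y * M * (Xᴴ * Cᴴ) = C * Cᴴ := by
      rw [← Matrix.mul_assoc, ← hC]
    have e3 : C * X * M * Yᴴ = C * Cᴴ := by
      rw [Matrix.mul_assoc C X M, Matrix.mul_assoc C (X*M) Yᴴ, hXMY]
    have e4 : C * X * M * (Xᴴ * Cᴴ) = C * Cᴴ := by
      rw [Matrix.mul_assoc C X M, Matrix.mul_assoc C (X*M) (Xᴴ*Cᴴ), ← Matrix.mul_assoc (X*M) Xᴴ Cᴴ,
        ← hXI, Matrix.one_mul]
    rw [Matrix.mul_assoc Y M Yᴴ] at e1 ⊢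
    rw [Matrix.mul_assoc Y M (Xᴴ * Cᴴ)] at e2 ⊢
    rw [Matrix.mul_assoc (C*X) M Yᴴ] at e3 ⊢
    rw [Matrix.mul_assoc (C*X) M (Xᴴ*Cᴴ)] at e4 ⊢
    rw [e1, e2, e3, e4]
    abel
  have hGpsd : G.PosSemidef := by
    rw [← hYY]
    exact hpsd.mul_mul_conjTranspose_same Y'
  -- entry lemma
  have entry : ∀ {k l : ℕ} (A : Matrix (Fin k) (Fin d) ℂ) (B : Matrix (Fin l) (Fin d) ℂ)
      (i : Fin k) (j : Fin l), (A * M * Bᴴ) i j = A i ⬝ᵥ M *ᵥ star (B j) := by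
    intro k l A B i j
    simp only [Matrix.mul_apply, Matrix.conjTranspose_apply, dotProduct, Matrix.mulVec,
      dotProduct, Finset.mul_sum, Finset.sum_mul, Pi.star_apply]
    rw [Finset.sum_comm]
    congr 1; ext t; congr 1; ext s; ring
  have fXX : ∀ a b : Fin 2, X a ⬝ᵥ M *ᵥ star (X b) = if a = b then 1 else 0 := by
    intro a b
    rw [← entry, ← hXI, Matrix.one_apply]
  have fY'X : ∀ a b : Fin 2, Y' a ⬝ᵥ M *ᵥ star (X b) = 0 := by
    intro a b; rw [← entry, hY'X]; rfl
  have fXY' : ∀ a b : Fin 2, X a ⬝ᵥ M *ᵥ star (Y' b) = 0 := by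
    intro a b; rw [← entry, hXY']; rfl
  have fY'Y' : ∀ a b : Fin 2, Y' a ⬝ᵥ M *ᵥ star (Y' b) = G a b := by
    intro a b; rw [← entry, hYY]
  -- main construction
  have main : ∀ (r : Fin 2) (c : ℂ), G r r = c → Represents M (Matrix.diagonal ![1, 1, c]) := by
    intro r c hc
    refine ⟨![X 0, X 1, Y' r], ?_, ?_⟩
    · intro i j
      fin_cases i <;>
        simp only [Matrix.cons_val_zero, Matrix.cons_val_one, Matrix.cons_val_two,
          Matrix.head_cons, Matrix.tail_cons] <;>
        first | exact hXmem _ _ | exact hY'mem _ _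
    · ext i j
      refine Eq.trans ?_ (entry (k := 3) (l := 3) ![X 0, X 1, Y' r] ![X 0, X 1, Y' r] i j).symm
      fin_cases i <;> fin_cases j <;>
        simp only [Matrix.cons_val_zero, Matrix.cons_val_one, Matrix.cons_val_two,
          Matrix.head_cons, Matrix.tail_cons, Fin.isValue, Matrix.diagonal_apply,
          fXX, fY'X, fXY', fY'Y', hc] <;>
        simp [hc, fXX, fY'X, fXY', fY'Y']
  -- cast norms of entries of C
  obtain ⟨n00, hn00, hn00'⟩ := norm_ringO3 (hCmem 0 0)
  obtain ⟨n01, hn01, hn01'⟩ := norm_ringO3 (hCmem 0 1)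
  obtain ⟨n10, hn10, hn10'⟩ := norm_ringO3 (hCmem 1 0)
  obtain ⟨n11, hn11, hn11'⟩ := norm_ringO3 (hCmem 1 1)
  have hCC : ∀ a b : Fin 2, (C * Cᴴ) a b = C a 0 * star (C b 0) + C a 1 * star (C b 1) := by
    intro a b
    simp [Matrix.mul_apply, Fin.sum_univ_two, Matrix.conjTranspose_apply]
  have hG00 : G 0 0 = 1 - ((n00 : ℂ) + n01) := by
    have h := hCC 0 0
    rw [hn00, hn01] at h
    rw [hG, Matrix.sub_apply, h]
    simp
  have hG11 : G 1 1 = 2 - ((n10 : ℂ) + n11) := by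
    have h := hCC 1 1
    rw [hn10, hn11] at h
    rw [hG, Matrix.sub_apply, h]
    simp
  have hdiag : ∀ i : Fin 2, 0 ≤ G i i := by
    intro i
    have h := hGpsd.dotProduct_mulVec_nonneg (Pi.single i 1)
    have hv : star (Pi.single i (1:ℂ)) ⬝ᵥ G *ᵥ Pi.single i 1 = G i i := by
      fin_cases i <;>
        simp [dotProduct, Matrix.mulVec, Fin.sum_univ_two, Pi.single_apply]
    rwa [hv] at h
  have hle1 : n00 + n01 ≤ 1 := by
    have h := hdiag 0
    rw [hG00] at h
    have hre := (Complex.nonneg_iff.mp h).1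
    have hre' : (0:ℝ) ≤ 1 - ((n00 : ℝ) + n01) := by simpa using hre
    have : (n00 : ℝ) + n01 ≤ 1 := by linarith
    exact_mod_cast this
  have hle2 : n10 + n11 ≤ 2 := by
    have h := hdiag 1
    rw [hG11] at h
    have hre := (Complex.nonneg_iff.mp h).1
    have hre' : (0:ℝ) ≤ 2 - ((n10 : ℝ) + n11) := by simpa using hre
    have : (n10 : ℝ) + n11 ≤ 2 := by linarith
    exact_mod_cast this
  have finish1 : Represents M (Matrix.diagonal ![1, 1, (1:ℂ)]) → TwoUniversal M := by
    intro hrep k B hB hBpsd hBr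
    exact rep_trans hrep (h111 k B hB hBpsd hBr)
  have finish2 : Represents M (Matrix.diagonal ![1, 1, (2:ℂ)]) → TwoUniversal M := by
    intro hrep k B hB hBpsd hBr
    exact rep_trans hrep (h112 k B hB hBpsd hBr)
  rcases (by omega : n00 + n01 = 0 ∨ n00 + n01 = 1) with h0 | h1
  · -- n00 + n01 = 0, G 0 0 = 1
    refine finish1 (main 0 1 ?_)
    have e0 : n00 = 0 := by omega
    have e1 : n01 = 0 := by omega
    rw [hG00, e0, e1]
    norm_num
  · -- n00 + n01 = 1, G 0 0 = 0
    have hsum : ((n00 : ℂ) + n01) = 1 := by exact_mod_cast congrArg (Nat.cast : ℕ → ℂ) h1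
    have hG00z : G 0 0 = 0 := by rw [hG00, hsum]; ring
    -- G 0 1 = 0 by positive semidefiniteness
    have hG01 : G 0 1 = 0 := by
      by_contra hne
      have hG10 : G 1 0 = star (G 0 1) := (hGpsd.1.apply 1 0).symm
      set q : ℝ := Complex.normSq (G 0 1) with hq
      have hqpos : 0 < q := Complex.normSq_pos.mpr hne
      set s : ℝ := ((G 1 1).re + 1) / (2 * q) with hs
      have h := hGpsd.dotProduct_mulVec_nonneg ![-(s:ℂ) * G 0 1, 1]
      have hmc : G 0 1 * star (G 0 1) = (q : ℂ) := Complex.mul_conj (G 0 1)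
      have hv : star ![-(s:ℂ) * G 0 1, 1] ⬝ᵥ G *ᵥ ![-(s:ℂ) * G 0 1, 1]
          = G 1 1 - 2 * s * (q : ℂ) := by
        simp only [dotProduct, Matrix.mulVec, Fin.sum_univ_two, Matrix.cons_val_zero,
          Matrix.cons_val_one, Matrix.head_cons, Pi.star_apply, hG00z, hG10,
          star_mul', star_neg, star_one, _root_.map_one, _root_.map_mul, _root_.map_neg, Complex.star_def, Complex.conj_ofReal]
        rw [Complex.star_def] at hmc
        linear_combination (-(2:ℂ) * s) * hmc
      rw [hv] at h
      have hre := (Complex.nonneg_iff.mp h).1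
      have hre' : (0:ℝ) ≤ (G 1 1).re - 2 * s * q := by
        simpa [Complex.sub_re, Complex.ofReal_re] using hre
      have hsq : 2 * s * q = (G 1 1).re + 1 := by
        rw [hs]
        field_simp
      linarith
    -- hence the off-diagonal relation
    have hrel : C 0 0 * star (C 1 0) + C 0 1 * star (C 1 1) = 0 := by
      have h := hCC 0 1
      have hGd : G 0 1 = Matrix.diagonal ![(1:ℂ), 2] 0 1 - (C * Cᴴ) 0 1 := by
        rw [hG, Matrix.sub_apply]
      rw [hG01, h] at hGd
      simp at hGd
      simp only [Complex.star_def]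
      linear_combination hGd
    -- split according to which norm is 1
    rcases (by omega : (n00 = 1 ∧ n01 = 0) ∨ (n00 = 0 ∧ n01 = 1)) with ⟨e0, e1⟩ | ⟨e0, e1⟩
    · -- C 0 1 = 0, C 0 0 unit
      have hC01 : C 0 1 = 0 := by
        refine zero_of_mul_star_self_eq_zero ?_
        rw [hn01, e1]; simp
      have hC00ne : C 0 0 ≠ 0 := by
        intro h
        rw [h] at hn00
        rw [e0] at hn00
        simp at hn00
      have hC10 : C 1 0 = 0 := by
        rw [hC01] at hrel
        simp at hrel
        rcases hrel with h | h
        · exact absurd h hC00ne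
        · exact h
      have hn10z : n10 = 0 := by
        rw [hC10] at hn10
        simp at hn10
        exact_mod_cast hn10.symm
      have hn11le : n11 = 0 ∨ n11 = 1 := by omega
      rcases hn11le with e | e
      · refine finish2 (main 1 2 ?_)
        rw [hG11, hn10z, e]; norm_num
      · refine finish1 (main 1 1 ?_)
        rw [hG11, hn10z, e]; norm_num
    · -- C 0 0 = 0, C 0 1 unit
      have hC00 : C 0 0 = 0 := by
        refine zero_of_mul_star_self_eq_zero ?_
        rw [hn00, e0]; simp
      have hC01ne : C 0 1 ≠ 0 := by
        intro h
        rw [h] at hn01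
        rw [e1] at hn01
        simp at hn01
      have hC11 : C 1 1 = 0 := by
        rw [hC00] at hrel
        simp at hrel
        rcases hrel with h | h
        · exact absurd h hC01ne
        · exact h
      have hn11z : n11 = 0 := by
        rw [hC11] at hn11
        simp at hn11
        exact_mod_cast hn11.symm
      have hn10le : n10 = 0 ∨ n10 = 1 := by omega
      rcases hn10le with e | e
      · refine finish2 (main 1 2 ?_)
        rw [hG11, hn11z, e]; norm_num
      · refine finish1 (main 1 1 ?_)
        rw [hG11, hn11z, e]; norm_num
end
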